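/- arXiv:math/0005281 — 2 statements merged into one kernel-verified Lean document; each statement's English description precedes it below -/
import Mathlib

section
/- Let G(z) be an n×k matrix over 𝔽[z] of rank k, let C = colsp_{𝔽[z]} G(z) ⊆ 𝔽^n[z] be the 𝔽[z]-span of its columns, and let δ be the degree of C. Then there exist constant matrices K, L ∈ 𝔽^{(δ+n−k)×δ} and M ∈ 𝔽^{(δ+n−k)×n} such that C = { v(z) ∈ 𝔽^n[z] : there exists x(z) ∈ 𝔽^δ[z] with zKx(z) + Lx(z) + Mv(z) = 0 }, and moreover: (i) K has full column rank; (ii) the matrix [K M] has full row rank; (iii) the (δ+n−k)×(δ+n) polynomial matrix [zK+L | M] is left prime over 𝔽[z]. -/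
open Matrix
open Polynomial

section ConvolutionalDefs

variable {𝔽 : Type} [Field 𝔽]

/-- The left shift `(σw)_t = w_{t+1}` on bi-infinite sequences. -/
def shiftZ {A : Type} (w : ℤ → A) : ℤ → A := fun t => w (t + 1)

/-- A set of bi-infinite sequences is shift-invariant if `σX ⊆ X`. -/
def ShiftInvariant {A : Type} (X : Set (ℤ → A)) : Prop := ∀ w ∈ X, shiftZ w ∈ X

/-- A block `β` occurs in the bi-infinite sequence `w` if `β = w_j w_{j+1} … w_{j+k-1}`
for some `j ∈ ℤ`. -/
def BlockOccursIn {A : Type} (β : List A) (w : ℤ → A) : Prop :=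
  ∃ j : ℤ, ∀ l : Fin β.length, β.get l = w (j + ((l : ℕ) : ℤ))

/-- A block occurs in some element of the set `X`. -/
def OccursInSome {A : Type} (β : List A) (X : Set (ℤ → A)) : Prop :=
  ∃ w ∈ X, BlockOccursIn β w

/-- A set of sequences is irreducible if any ordered pair of blocks occurring in it can be
completed to a single block occurring in it. -/
def IrreducibleShift {A : Type} (X : Set (ℤ → A)) : Prop :=
  ∀ β γ : List A, OccursInSome β X → OccursInSome γ X →
    ∃ μ : List A, OccursInSome (β ++ μ ++ γ) X

/-- A subset of a module is `𝔽`-linear. -/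
def IsFLinearSet (𝔽 : Type) [Field 𝔽] {M : Type} [AddCommGroup M] [Module 𝔽 M]
    (C : Set M) : Prop :=
  (0 : M) ∈ C ∧ (∀ x ∈ C, ∀ y ∈ C, x + y ∈ C) ∧ ∀ (c : 𝔽), ∀ x ∈ C, c • x ∈ C

/-- A behavior `B` is complete if membership can be decided on finite windows:
any `w` which agrees on every finite interval with some element of `B` lies in `B`. -/
def CompleteBehavior {A : Type} (B : Set (ℤ → A)) : Prop :=
  ∀ w : ℤ → A, (∀ a b : ℤ, ∃ x ∈ B, ∀ t : ℤ, a ≤ t → t ≤ b → x t = w t) → w ∈ B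

/-- A behavior `B ⊆ (𝔽^n)^ℤ` is controllable if there is `ℓ ≥ 0` such that any past of a
trajectory of `B` can be concatenated, after a lag of length `ℓ`, with any future of a
trajectory of `B`. -/
def ControllableBehavior {A : Type} (B : Set (ℤ → A)) : Prop :=
  ∃ ℓ : ℕ, ∀ w ∈ B, ∀ w' ∈ B, ∀ j : ℤ, ∃ w'' ∈ B,
    (∀ t : ℤ, t ≤ j → w'' t = w t) ∧ (∀ t : ℤ, j + (ℓ : ℤ) ≤ t → w'' t = w' t)

/-- The operator `G(σ)` associated to a Laurent-polynomial matrix `G(z) = Σ_i G_i z^i`: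
`(G(σ)m)_t = Σ_i G_i m_{t+i}`. -/
noncomputable def lSigma {n k : ℕ} (G : Matrix (Fin n) (Fin k) (LaurentPolynomial 𝔽))
    (m : ℤ → Fin k → 𝔽) : ℤ → Fin n → 𝔽 :=
  fun t a => ∑ b : Fin k, (G a b).coeff.sum fun i c => c * m (t + i) b

/-- The operator `P(σ)` associated to a polynomial matrix, acting on two-sided sequences. -/
noncomputable def pSigma {n k : ℕ} (P : Matrix (Fin n) (Fin k) (Polynomial 𝔽))
    (w : ℤ → Fin k → 𝔽) : ℤ → Fin n → 𝔽 :=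
  fun t a => ∑ b : Fin k, (P a b).sum fun i c => c * w (t + (i : ℤ)) b

/-- The operator `P(σ)` associated to a polynomial matrix, acting on one-sided sequences. -/
noncomputable def pSigmaPlus {n k : ℕ} (P : Matrix (Fin n) (Fin k) (Polynomial 𝔽))
    (w : ℕ → Fin k → 𝔽) : ℕ → Fin n → 𝔽 :=
  fun t a => ∑ b : Fin k, (P a b).sum fun i c => c * w (t + i) b

/-- View a vector of formal Laurent series as a bi-infinite sequence. -/
def lsToSeq {n : ℕ} (v : Fin n → LaurentSeries 𝔽) : ℤ → Fin n → 𝔽 :=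
  fun t a => (v a).coeff t

/-- View a vector of Laurent polynomials as a (finite-support) bi-infinite sequence. -/
def lpToSeq {n : ℕ} (v : Fin n → LaurentPolynomial 𝔽) : ℤ → Fin n → 𝔽 :=
  fun t a => (v a).coeff t

/-- The pairing `(w,v) = Σ_i ⟨w_i, v_i⟩` between a bi-infinite sequence and a finite-support
(Laurent polynomial) vector. -/
noncomputable def seqPairing {n : ℕ} (w : ℤ → Fin n → 𝔽) (v : Fin n → LaurentPolynomial 𝔽) : 𝔽 :=
  ∑ a : Fin n, (v a).coeff.sum fun i c => w i a * c

/-- The `j`-th column degree of a polynomial matrix. -/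
def colDeg {n k : ℕ} (G : Matrix (Fin n) (Fin k) (Polynomial 𝔽)) (j : Fin k) : ℕ :=
  Finset.univ.sup fun i => (G i j).natDegree

/-- The `i`-th row degree of a polynomial matrix. -/
def rowDeg {r n : ℕ} (P : Matrix (Fin r) (Fin n) (Polynomial 𝔽)) (i : Fin r) : ℕ :=
  Finset.univ.sup fun j => (P i j).natDegree

/-- A polynomial `n×k` matrix is column reduced if the constant matrix of leading column
coefficients has rank `k`. -/
def ColumnReduced {n k : ℕ} (G : Matrix (Fin n) (Fin k) (Polynomial 𝔽)) : Prop :=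
  Matrix.rank (Matrix.of fun i j => (G i j).coeff (colDeg G j)) = k

/-- A polynomial `r×n` matrix is row reduced if the constant matrix of leading row
coefficients has rank `r`. -/
def RowReduced {r n : ℕ} (P : Matrix (Fin r) (Fin n) (Polynomial 𝔽)) : Prop :=
  Matrix.rank (Matrix.of fun i j => (P i j).coeff (rowDeg P i)) = r

/-- A matrix over a commutative ring is right prime if it has a left inverse over the ring. -/
def RightPrime {R : Type} [CommRing R] {m l : Type} [Fintype m] [Fintype l] [DecidableEq l]
    (G : Matrix m l R) : Prop :=
  ∃ L : Matrix l m R, L * G = 1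

/-- A matrix over a commutative ring is left prime if it has a right inverse over the ring. -/
def LeftPrime {R : Type} [CommRing R] {m l : Type} [Fintype m] [Fintype l] [DecidableEq m]
    (P : Matrix m l R) : Prop :=
  ∃ Q : Matrix l m R, P * Q = 1

end ConvolutionalDefs

set_option maxHeartbeats 1000000

section Aux
variable {𝔽 : Type} [Field 𝔽]

/-- columns of A*B lie in the span of columns of A -/
lemma span_cols_mul_le {R : Type} [CommRing R] {n k l : ℕ}
    (A : Matrix (Fin n) (Fin k) R) (B : Matrix (Fin k) (Fin l) R) :
    Submodule.span R (Set.range (A * B)ᵀ) ≤ Submodule.span R (Set.range Aᵀ) := by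
  rw [Submodule.span_le]
  rintro _ ⟨j, rfl⟩
  have h : (A * B)ᵀ j = ∑ l, B l j • Aᵀ l := by
    funext i
    simp [Matrix.mul_apply, Finset.sum_apply, mul_comm]
  rw [h]
  exact Submodule.sum_mem _ fun l _ =>
    Submodule.smul_mem _ _ (Submodule.subset_span ⟨l, rfl⟩)

lemma span_cols_mul_unit {R : Type} [CommRing R] {n k : ℕ}
    (A : Matrix (Fin n) (Fin k) R) (U : Matrix (Fin k) (Fin k) R) (hU : IsUnit U) :
    Submodule.span R (Set.range (A * U)ᵀ) = Submodule.span R (Set.range Aᵀ) := by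
  refine le_antisymm (span_cols_mul_le A U) ?_
  obtain ⟨u, rfl⟩ := hU
  have key : (↑u : Matrix (Fin k) (Fin k) R) * (↑u⁻¹ : Matrix (Fin k) (Fin k) R) = 1 := u.mul_inv
  have hA : A = (A * (↑u : Matrix (Fin k) (Fin k) R)) * (↑u⁻¹ : Matrix (Fin k) (Fin k) R) := by
    rw [Matrix.mul_assoc, key, Matrix.mul_one]
  calc Submodule.span R (Set.range Aᵀ)
      = Submodule.span R
          (Set.range ((A * (↑u : Matrix (Fin k) (Fin k) R)) * (↑u⁻¹ : Matrix (Fin k) (Fin k) R))ᵀ) := by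
        rw [← hA]
    _ ≤ Submodule.span R (Set.range (A * (↑u : Matrix (Fin k) (Fin k) R))ᵀ) := span_cols_mul_le _ _

/-- existence of a matrix with prescribed kernel -/
lemma exists_P {n : ℕ} (W : Submodule 𝔽 (Fin n → 𝔽)) :
    ∃ P : Matrix (Fin (n - Module.finrank 𝔽 W)) (Fin n) 𝔽,
      Function.Surjective P.mulVec ∧ ∀ v, P.mulVec v = 0 ↔ v ∈ W := by
  have hfr : Module.finrank 𝔽 (Fin n → 𝔽) = n := by simp
  have hq : Module.finrank 𝔽 ((Fin n → 𝔽) ⧸ W) = n - Module.finrank 𝔽 W := by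
    have h1 := Submodule.finrank_quotient_add_finrank W
    have h2 := Submodule.finrank_le W
    omega
  let b : Module.Basis (Fin (n - Module.finrank 𝔽 W)) 𝔽 ((Fin n → 𝔽) ⧸ W) :=
    (Module.finBasis 𝔽 _).reindex (finCongr hq)
  refine ⟨LinearMap.toMatrix (Pi.basisFun 𝔽 (Fin n)) b W.mkQ, ?_, ?_⟩
  · intro y
    obtain ⟨x, hx⟩ := W.mkQ_surjective (b.repr.symm (Finsupp.equivFunOnFinite.symm y))
    refine ⟨x, ?_⟩
    have := LinearMap.toMatrix_mulVec_repr (Pi.basisFun 𝔽 (Fin n)) b W.mkQ x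
    rw [show ⇑((Pi.basisFun 𝔽 (Fin n)).repr x) = x by ext i; simp] at this
    rw [this, hx]
    simp only [LinearEquiv.apply_symm_apply]
    rfl
  · intro v
    have := LinearMap.toMatrix_mulVec_repr (Pi.basisFun 𝔽 (Fin n)) b W.mkQ v
    rw [show ⇑((Pi.basisFun 𝔽 (Fin n)).repr v) = v by ext i; simp] at this
    rw [this]
    constructor
    · intro h
      have h0 : b.repr (W.mkQ v) = 0 := by
        ext i; exact congrFun h i
      have : W.mkQ v = 0 := by
        have := congrArg b.repr.symm h0
        simpa using this
      simpa [Submodule.Quotient.mk_eq_zero] using this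
    · intro h
      have : W.mkQ v = 0 := by simpa [Submodule.Quotient.mk_eq_zero] using h
      rw [this]
      simp

lemma leftPrime_of_surjective {R : Type} [CommRing R] {m l : Type} [Fintype m] [Fintype l]
    [DecidableEq m] [DecidableEq l] (A : Matrix m l R)
    (h : Function.Surjective A.mulVecLin) : ∃ Q : Matrix l m R, A * Q = 1 := by
  obtain ⟨g, hg⟩ := Module.projective_lifting_property A.mulVecLin LinearMap.id h
  refine ⟨LinearMap.toMatrix' g, ?_⟩
  have h1 : (A * LinearMap.toMatrix' g).mulVecLin = (1 : Matrix m m R).mulVecLin := by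
    rw [Matrix.mulVecLin_mul, Matrix.mulVecLin_one]
    have : (LinearMap.toMatrix' g).mulVecLin = g := by
      rw [show Matrix.mulVecLin = @Matrix.toLin' R _ _ _ _ _ from rfl]
      exact Matrix.toLin'_toMatrix' g
    rw [this, hg]
  have := congrArg LinearMap.toMatrix' h1
  rwa [show Matrix.mulVecLin = @Matrix.toLin' R _ _ _ _ _ from rfl,
    LinearMap.toMatrix'_toLin', LinearMap.toMatrix'_toLin'] at this

end Aux



section Aux2
variable {𝔽 : Type} [Field 𝔽]

/-- rank of a rectangular matrix is invariant under reindexing by equivs -/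
lemma rank_submatrix_equiv {R : Type} [CommRing R] {m n m' n' : Type}
    [Fintype n] [Fintype n'] (A : Matrix m n R) (e₁ : m' ≃ m) (e₂ : n' ≃ n) :
    (A.submatrix e₁ e₂).rank = A.rank := by
  rw [Matrix.rank, Matrix.rank, Matrix.mulVecLin_submatrix, LinearMap.range_comp]
  have h2 : LinearMap.range (A.mulVecLin ∘ₗ LinearMap.funLeft R R e₂.symm)
      = LinearMap.range A.mulVecLin := by
    rw [LinearMap.range_comp_of_range_eq_top]
    rw [LinearMap.range_eq_top]
    exact (LinearEquiv.funCongrLeft R R e₂.symm).surjective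
  rw [h2]
  exact LinearEquiv.finrank_map_eq (LinearEquiv.funCongrLeft R R e₁) _

lemma rank_eq_card_of_injective {m n : Type} [Fintype m] [Fintype n] (A : Matrix m n 𝔽)
    (h : Function.Injective A.mulVecLin) : A.rank = Fintype.card n := by
  rw [Matrix.rank, LinearMap.finrank_range_of_inj h]
  simp

lemma rank_eq_card_of_surjective {m n : Type} [Fintype m] [Fintype n] (A : Matrix m n 𝔽)
    (h : Function.Surjective A.mulVecLin) : A.rank = Fintype.card m := by
  rw [Matrix.rank, LinearMap.range_eq_top.mpr h]
  simp

/-- a polynomial vector all of whose coefficient vectors lie in the span of an independent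
family is a polynomial combination of that family -/
lemma poly_comb_of_coeff_mem {τ : Type} [Fintype τ] {n : ℕ}
    (b : τ → (Fin n → 𝔽)) (hb : LinearIndependent 𝔽 b)
    (w : Fin n → Polynomial 𝔽)
    (hw : ∀ d : ℕ, (fun i => (w i).coeff d) ∈ Submodule.span 𝔽 (Set.range b)) :
    ∃ p : τ → Polynomial 𝔽, ∀ i, w i = ∑ t, p t * Polynomial.C (b t i) := by
  classical
  set N : ℕ := (Finset.univ.sup fun i => (w i).natDegree) + 1 with hN
  have hdeg : ∀ i, (w i).natDegree < N := by
    intro i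
    have h1 := Finset.le_sup (f := fun i => (w i).natDegree) (Finset.mem_univ i)
    omega
  let B : Module.Basis τ 𝔽 _ := Module.Basis.span hb
  let cv : ℕ → Submodule.span 𝔽 (Set.range b) := fun d => ⟨fun i => (w i).coeff d, hw d⟩
  have hrepr : ∀ d : ℕ, ∀ i, ∑ t, B.repr (cv d) t * b t i = (w i).coeff d := by
    intro d i
    have hs := B.sum_repr (cv d)
    have := congrArg (fun (x : Submodule.span 𝔽 (Set.range b)) => (x : Fin n → 𝔽) i) hs
    simp only [AddSubmonoidClass.coe_finset_sum, Finset.sum_apply, SetLike.val_smul,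
      Pi.smul_apply, smul_eq_mul] at this
    have hB : ∀ t, (B t : Fin n → 𝔽) = b t := fun t => congrArg Subtype.val (Module.Basis.span_apply hb t)
    calc ∑ t, B.repr (cv d) t * b t i = ∑ t, B.repr (cv d) t * (B t : Fin n → 𝔽) i := by
          refine Finset.sum_congr rfl fun t _ => by rw [hB]
      _ = (w i).coeff d := this
  refine ⟨fun t => ∑ d ∈ Finset.range N, Polynomial.C (B.repr (cv d) t) * X ^ d, fun i => ?_⟩
  ext d
  rw [Polynomial.finset_sum_coeff]
  simp only [Polynomial.coeff_mul_C]
  have hcoeff : ∀ t : τ, (∑ d' ∈ Finset.range N, Polynomial.C (B.repr (cv d') t) * X ^ d').coeff d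
      = if d < N then B.repr (cv d) t else 0 := by
    intro t
    rw [Polynomial.finset_sum_coeff]
    simp only [Polynomial.coeff_C_mul, Polynomial.coeff_X_pow, mul_ite, mul_one, mul_zero]
    rw [Finset.sum_ite_eq (Finset.range N) d]
    simp
  simp only [hcoeff]
  by_cases h : d < N
  · simp only [if_pos h]
    exact (hrepr d i).symm
  · simp only [if_neg h, zero_mul, Finset.sum_const_zero]
    exact Polynomial.coeff_eq_zero_of_natDegree_lt (by have := hdeg i; omega)

lemma sigma_eq_of {k : ℕ} {κ : Fin k → ℕ} (s : (j : Fin k) × Fin (κ j)) (j : Fin k)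
    (i : Fin (κ j)) (h1 : s.1 = j) (h2 : (s.2 : ℕ) = (i : ℕ)) : s = ⟨j, i⟩ := by
  obtain ⟨j', i'⟩ := s
  subst h1
  simp only at h2
  rw [Fin.ext h2]

lemma sigma_sum_split {k : ℕ} {κ : Fin k → ℕ} {Mty : Type} [AddCommMonoid Mty]
    (f : ((j : Fin k) × Fin (κ j)) → Mty) :
    ∑ s : (j : Fin k) × Fin (κ j), f s = ∑ j : Fin k, ∑ i : Fin (κ j), f ⟨j, i⟩ := by
  rw [← Finset.univ_sigma_univ, Finset.sum_sigma]

end Aux2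



/-- Existence of first-order representations of finite-support codes: the column
module `C = colsp_{𝔽[z]} G(z) ⊆ 𝔽^n[z]` of degree `δ` admits a minimal first-order (pencil)
representation `zKx(z) + Lx(z) + Mv(z) = 0` by constant matrices `K, L, M`. -/




theorem first_order_representation_code
    (𝔽 : Type) [Field 𝔽] [Fintype 𝔽] (n k : ℕ)
    (G : Matrix (Fin n) (Fin k) (Polynomial 𝔽))
    (hG : LinearIndependent (Polynomial 𝔽) Gᵀ)
    (C : Submodule (Polynomial 𝔽) (Fin n → Polynomial 𝔽))
    (hC : C = Submodule.span (Polynomial 𝔽) (Set.range Gᵀ))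
    -- the degree `δ` of `C`, computed from any column-reduced encoder
    (U : Matrix (Fin k) (Fin k) (Polynomial 𝔽)) (hU : IsUnit U)
    (hGU : ColumnReduced (G * U))
    (δ : ℕ) (hδ : δ = ∑ j : Fin k, colDeg (G * U) j) :
    ∃ (K L : Matrix (Fin (δ + (n - k))) (Fin δ) 𝔽)
      (M : Matrix (Fin (δ + (n - k))) (Fin n) 𝔽),
      (C : Set (Fin n → Polynomial 𝔽)) =
        { v : Fin n → Polynomial 𝔽 | ∃ x : Fin δ → Polynomial 𝔽,
          (Polynomial.X : Polynomial 𝔽) •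
              (K.map (fun a => (Polynomial.C a : Polynomial 𝔽))).mulVec x +
            (L.map (fun a => (Polynomial.C a : Polynomial 𝔽))).mulVec x +
            (M.map (fun a => (Polynomial.C a : Polynomial 𝔽))).mulVec v = 0 } ∧
      K.rank = δ ∧
      (Matrix.fromCols K M).rank = δ + (n - k) ∧
      LeftPrime (Matrix.fromCols
        ((Polynomial.X : Polynomial 𝔽) • K.map (fun a => (Polynomial.C a : Polynomial 𝔽)) +
          L.map (fun a => (Polynomial.C a : Polynomial 𝔽)))
        (M.map (fun a => (Polynomial.C a : Polynomial 𝔽)))) := by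
  classical
  set A := G * U with hAdef
  have hspan : C = Submodule.span (Polynomial 𝔽) (Set.range Aᵀ) := by
    rw [hC, hAdef]
    exact (span_cols_mul_unit G U hU).symm
  set κ : Fin k → ℕ := colDeg A with hκdef
  have hAdeg : ∀ i j, (A i j).natDegree ≤ κ j := by
    intro i j
    exact Finset.le_sup (f := fun i => (A i j).natDegree) (Finset.mem_univ i)
  have hAcoeff : ∀ i j d, κ j < d → (A i j).coeff d = 0 := fun i j d hd =>
    Polynomial.coeff_eq_zero_of_natDegree_lt (lt_of_le_of_lt (hAdeg i j) hd)
  set c : Fin k → ℕ → (Fin n → 𝔽) := fun j d a => (A a j).coeff d with hcdef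
  set Λ : Fin k → (Fin n → 𝔽) := fun j => c j (κ j) with hΛdef
  have hΛli : LinearIndependent 𝔽 Λ := by
    rw [linearIndependent_iff_card_eq_finrank_span]
    have h1 : (Matrix.of fun i j => (A i j).coeff (colDeg A j)).rank = k := hGU
    rw [Matrix.rank_eq_finrank_span_cols] at h1
    have h2 : Set.range Λ = Set.range (Matrix.of fun i j => (A i j).coeff (colDeg A j))ᵀ := rfl
    rw [Set.finrank, h2, Fintype.card_fin]
    exact h1.symm
  have hkn : k ≤ n := by
    have h1 := hΛli.fintype_card_le_finrank
    simpa using h1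
  set bT : {j : Fin k // κ j = 0} → (Fin n → 𝔽) := fun t => Λ t.1 with hbTdef
  have hbTli : LinearIndependent 𝔽 bT := hΛli.comp _ Subtype.val_injective
  set W : Submodule 𝔽 (Fin n → 𝔽) := Submodule.span 𝔽 (Set.range bT) with hWdef
  set k0 := Fintype.card {j : Fin k // κ j = 0} with hk0def
  have hWfr : Module.finrank 𝔽 W = k0 := by
    rw [hWdef, finrank_span_eq_card hbTli, hk0def]
  have hk0k : k0 ≤ k := by
    rw [hk0def]
    have h1 := Fintype.card_subtype_le (fun j : Fin k => κ j = 0)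
    simpa using h1
  have hsum : (∑ j : Fin k, (κ j - 1)) + (k - k0) = δ := by
    have h1 : ∑ j : Fin k, ((κ j - 1) + (if 0 < κ j then 1 else 0)) = δ := by
      rw [hδ]
      exact Finset.sum_congr rfl fun j _ => by split_ifs with h <;> omega
    rw [Finset.sum_add_distrib] at h1
    have h3 := Finset.card_filter_add_card_filter_not
      (s := (Finset.univ : Finset (Fin k))) (p := fun j => 0 < κ j)
    have h4 : (Finset.univ.filter fun j : Fin k => ¬ 0 < κ j)
        = (Finset.univ.filter fun j : Fin k => κ j = 0) := by
      apply Finset.filter_congr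
      intro j _
      simp only [not_lt, Nat.le_zero, eq_iff_iff]
    have h5 : k0 = (Finset.univ.filter fun j : Fin k => κ j = 0).card := by
      rw [hk0def, Fintype.card_subtype]
    have h6 : (∑ j : Fin k, if 0 < κ j then 1 else 0)
        = (Finset.univ.filter fun j : Fin k => 0 < κ j).card := by
      rw [Finset.card_filter]
    rw [h4] at h3
    simp only [Finset.card_univ, Fintype.card_fin] at h3
    omega
  obtain ⟨P, hPsurj, hPker⟩ := exists_P W
  -- index types
  have hcardι : Fintype.card ((j : Fin k) × Fin (κ j)) = δ := by
    simp [Fintype.card_sigma, hδ]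
  have hcardR : Fintype.card (((j : Fin k) × Fin (κ j - 1)) ⊕ Fin (n - Module.finrank 𝔽 W))
      = δ + (n - k) := by
    simp only [Fintype.card_sum, Fintype.card_sigma, Fintype.card_fin, hWfr]
    omega
  set ι := (j : Fin k) × Fin (κ j) with hιdef
  set Rty := ((j : Fin k) × Fin (κ j - 1)) ⊕ Fin (n - Module.finrank 𝔽 W) with hRdef
  set eι : ι ≃ Fin δ := Fintype.equivFinOfCardEq hcardι with heιdef
  set eR : Rty ≃ Fin (δ + (n - k)) := Fintype.equivFinOfCardEq hcardR with heRdef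
  -- the matrices over structured index types
  set K₀ : Matrix Rty ι 𝔽 := fun r s =>
    match r with
    | .inl r1 => if r1.1 = s.1 ∧ (s.2 : ℕ) = (r1.2 : ℕ) + 1 then 1 else 0
    | .inr r2 => if (s.2 : ℕ) = 0 then -(P.mulVec (c s.1 (κ s.1)) r2) else 0
    with hK₀def
  set L₀ : Matrix Rty ι 𝔽 := fun r s =>
    match r with
    | .inl r1 => if r1.1 = s.1 ∧ (s.2 : ℕ) = (r1.2 : ℕ) then -1 else 0
    | .inr r2 => -(P.mulVec (c s.1 (κ s.1 - 1 - (s.2 : ℕ))) r2)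
    with hL₀def
  set M₀ : Matrix Rty (Fin n) 𝔽 := fun r a =>
    match r with
    | .inl _ => 0
    | .inr r2 => P r2 a
    with hM₀def
  set Kp := K₀.map (fun a => (Polynomial.C a : Polynomial 𝔽)) with hKpdef
  set Lp := L₀.map (fun a => (Polynomial.C a : Polynomial 𝔽)) with hLpdef
  set Mp := M₀.map (fun a => (Polynomial.C a : Polynomial 𝔽)) with hMpdef
  -- row evaluations over 𝔽[X]
  have hProw1 : ∀ (x : ι → Polynomial 𝔽) (j : Fin k) (t : Fin (κ j - 1)),
      (Kp *ᵥ x) (Sum.inl ⟨j, t⟩) = x ⟨j, ⟨(t : ℕ) + 1, by omega⟩⟩ := by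
    intro x j t
    show ∑ s : ι, Kp (Sum.inl ⟨j, t⟩) s * x s = _
    rw [Finset.sum_eq_single (⟨j, ⟨(t : ℕ) + 1, by omega⟩⟩ : ι)]
    · simp only [hKpdef, Matrix.map_apply]
      simp only [hK₀def]
      simp
    · intro s _ hs
      simp only [hKpdef, Matrix.map_apply]
      simp only [hK₀def]
      rw [if_neg, map_zero, zero_mul]
      rintro ⟨hh1, hh2⟩
      exact hs (sigma_eq_of s j _ hh1.symm hh2)
    · intro h
      exact absurd (Finset.mem_univ _) h
  have hProwL1 : ∀ (x : ι → Polynomial 𝔽) (j : Fin k) (t : Fin (κ j - 1)),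
      (Lp *ᵥ x) (Sum.inl ⟨j, t⟩) = -(x ⟨j, ⟨(t : ℕ), by omega⟩⟩) := by
    intro x j t
    show ∑ s : ι, Lp (Sum.inl ⟨j, t⟩) s * x s = _
    rw [Finset.sum_eq_single (⟨j, ⟨(t : ℕ), by omega⟩⟩ : ι)]
    · simp only [hLpdef, Matrix.map_apply]
      simp only [hL₀def]
      simp
    · intro s _ hs
      simp only [hLpdef, Matrix.map_apply]
      simp only [hL₀def]
      rw [if_neg, map_zero, zero_mul]
      rintro ⟨hh1, hh2⟩
      exact hs (sigma_eq_of s j _ hh1.symm hh2)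
    · intro h
      exact absurd (Finset.mem_univ _) h
  have hProwM1 : ∀ (v : Fin n → Polynomial 𝔽) (r1 : (j : Fin k) × Fin (κ j - 1)),
      (Mp *ᵥ v) (Sum.inl r1) = 0 := by
    intro v r1
    show ∑ a, Mp (Sum.inl r1) a * v a = 0
    exact Finset.sum_eq_zero fun a _ => by
      simp only [hMpdef, Matrix.map_apply]
      simp only [hM₀def]
      simp
  have hProwM2 : ∀ (v : Fin n → Polynomial 𝔽) r2,
      (Mp *ᵥ v) (Sum.inr r2) = ∑ a, Polynomial.C (P r2 a) * v a := by
    intro v r2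
    show ∑ a, Mp (Sum.inr r2) a * v a = _
    exact Finset.sum_congr rfl fun a _ => by
      simp only [hMpdef, Matrix.map_apply]
      simp only [hM₀def]
  have hProwK2 : ∀ (x : ι → Polynomial 𝔽) r2,
      (Kp *ᵥ x) (Sum.inr r2)
        = ∑ j : Fin k, -(Polynomial.C ((P.mulVec (c j (κ j))) r2))
            * (if h : 0 < κ j then x ⟨j, ⟨0, h⟩⟩ else 0) := by
    intro x r2
    show ∑ s : ι, Kp (Sum.inr r2) s * x s = _
    rw [sigma_sum_split (fun s => Kp (Sum.inr r2) s * x s)]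
    refine Finset.sum_congr rfl fun j _ => ?_
    by_cases h : 0 < κ j
    · rw [dif_pos h, Finset.sum_eq_single (⟨0, h⟩ : Fin (κ j))]
      · simp only [hKpdef, Matrix.map_apply]
        simp only [hK₀def]
        simp
      · intro i _ hi
        simp only [hKpdef, Matrix.map_apply]
        simp only [hK₀def]
        rw [if_neg, map_zero, zero_mul]
        intro h0
        exact hi (Fin.ext h0)
      · intro h'
        exact absurd (Finset.mem_univ _) h'
    · rw [dif_neg h, mul_zero]
      exact Finset.sum_eq_zero fun i _ => absurd i.isLt (by omega)
  have hProwL2 : ∀ (x : ι → Polynomial 𝔽) r2,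
      (Lp *ᵥ x) (Sum.inr r2)
        = ∑ j : Fin k, ∑ i : Fin (κ j),
            -(Polynomial.C ((P.mulVec (c j (κ j - 1 - (i : ℕ)))) r2)) * x ⟨j, i⟩ := by
    intro x r2
    show ∑ s : ι, Lp (Sum.inr r2) s * x s = _
    rw [sigma_sum_split (fun s => Lp (Sum.inr r2) s * x s)]
    refine Finset.sum_congr rfl fun j _ => Finset.sum_congr rfl fun i _ => ?_
    simp only [hLpdef, Matrix.map_apply]
    simp only [hL₀def]
    simp
  -- expansion of entries of A as sums of monomials
  have hAexp : ∀ (a : Fin n) (j : Fin k),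
      A a j = ∑ d ∈ Finset.range (κ j + 1), Polynomial.C ((A a j).coeff d) * X ^ d := by
    intro a j
    have h0 := (A a j).as_sum_range' (κ j + 1) (by have := hAdeg a j; omega)
    conv_lhs => rw [h0]
    exact Finset.sum_congr rfl fun d _ => (Polynomial.C_mul_X_pow_eq_monomial).symm
  have hPA : ∀ r2 (j : Fin k) (u : Polynomial 𝔽),
      ∑ a, Polynomial.C (P r2 a) * (u * A a j)
        = u * ∑ d ∈ Finset.range (κ j + 1), Polynomial.C ((P.mulVec (c j d)) r2) * X ^ d := by
    intro r2 j u
    rw [Finset.mul_sum]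
    calc ∑ a, Polynomial.C (P r2 a) * (u * A a j)
        = ∑ a, ∑ d ∈ Finset.range (κ j + 1),
            Polynomial.C (P r2 a) * (u * (Polynomial.C ((A a j).coeff d) * X ^ d)) := by
          refine Finset.sum_congr rfl fun a _ => ?_
          conv_lhs => rw [hAexp a j]
          rw [Finset.mul_sum, Finset.mul_sum]
      _ = ∑ d ∈ Finset.range (κ j + 1), ∑ a,
            Polynomial.C (P r2 a) * (u * (Polynomial.C ((A a j).coeff d) * X ^ d)) :=
          Finset.sum_comm
      _ = ∑ d ∈ Finset.range (κ j + 1),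
            u * (Polynomial.C ((P.mulVec (c j d)) r2) * X ^ d) := by
          refine Finset.sum_congr rfl fun d _ => ?_
          have h1 : ((P.mulVec (c j d)) r2) = ∑ a, P r2 a * c j d a := rfl
          rw [h1, map_sum, Finset.sum_mul, Finset.mul_sum]
          refine Finset.sum_congr rfl fun a _ => ?_
          have hc : c j d a = (A a j).coeff d := rfl
          rw [Polynomial.C_mul, hc]
          ring
  -- the zero-degree columns are annihilated by P
  have hq0 : ∀ j : Fin k, κ j = 0 → P.mulVec (c j 0) = 0 := by
    intro j hj
    rw [hPker]
    rw [hWdef]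
    refine Submodule.subset_span ⟨⟨j, hj⟩, ?_⟩
    show Λ j = c j 0
    rw [hΛdef]
    simp only
    rw [hj]
  -- key computation for the second block of rows
  have hinr_key : ∀ (u : Fin k → Polynomial 𝔽) r2,
      X * (Kp *ᵥ fun s : ι => X ^ (κ s.1 - 1 - (s.2 : ℕ)) * u s.1) (Sum.inr r2)
        + (Lp *ᵥ fun s : ι => X ^ (κ s.1 - 1 - (s.2 : ℕ)) * u s.1) (Sum.inr r2)
      = -∑ j : Fin k, ∑ a, Polynomial.C (P r2 a) * (u j * A a j) := by
    intro u r2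
    rw [hProwK2, hProwL2]
    rw [Finset.mul_sum, ← Finset.sum_add_distrib, ← Finset.sum_neg_distrib]
    refine Finset.sum_congr rfl fun j _ => ?_
    rw [hPA r2 j (u j)]
    by_cases h : 0 < κ j
    · rw [dif_pos h]
      have hrefl : (∑ i : Fin (κ j), -(Polynomial.C ((P.mulVec (c j (κ j - 1 - (i : ℕ)))) r2))
            * (X ^ (κ j - 1 - (i : ℕ)) * u j))
          = ∑ d ∈ Finset.range (κ j),
              -(Polynomial.C ((P.mulVec (c j d)) r2)) * (X ^ d * u j) := by
        rw [Fin.sum_univ_eq_sum_range (fun i =>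
          -(Polynomial.C ((P.mulVec (c j (κ j - 1 - i))) r2)) * (X ^ (κ j - 1 - i) * u j)) (κ j)]
        exact Finset.sum_range_reflect
          (fun d => -(Polynomial.C ((P.mulVec (c j d)) r2)) * (X ^ d * u j)) (κ j)
      rw [hrefl, Finset.sum_range_succ, mul_add, neg_add]
      have hX : X * X ^ (κ j - 1 - 0) = (X : Polynomial 𝔽) ^ κ j := by
        rw [Nat.sub_zero, ← pow_succ']
        congr 1
        omega
      have e1 : X * (-(Polynomial.C ((P.mulVec (c j (κ j))) r2)) * (X ^ (κ j - 1 - 0) * u j))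
          = -(u j * (Polynomial.C ((P.mulVec (c j (κ j))) r2) * X ^ κ j)) := by
        rw [← hX]
        ring
      have e2 : (∑ d ∈ Finset.range (κ j),
            -(Polynomial.C ((P.mulVec (c j d)) r2)) * (X ^ d * u j))
          = -(u j * ∑ d ∈ Finset.range (κ j), Polynomial.C ((P.mulVec (c j d)) r2) * X ^ d) := by
        rw [Finset.mul_sum, ← Finset.sum_neg_distrib]
        exact Finset.sum_congr rfl fun d _ => by ring
      rw [e1, e2]
      ring
    · rw [dif_neg h]
      have hz : κ j = 0 := by omega
      rw [mul_zero, mul_zero]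
      rw [Finset.sum_eq_zero (fun i (_ : i ∈ Finset.univ) => absurd i.isLt (by omega))]
      have hR : (∑ d ∈ Finset.range (κ j + 1),
          Polynomial.C ((P.mulVec (c j d)) r2) * X ^ d) = 0 := by
        rw [hz]
        simp only [zero_add, Finset.range_one, Finset.sum_singleton, pow_zero, mul_one]
        rw [show (P.mulVec (c j 0)) r2 = 0 from congrFun (hq0 j hz) r2]
        simp
      rw [hR]
      simp
  -- power identity for the shift rows
  have hxpow : ∀ (u : Fin k → Polynomial 𝔽) (j : Fin k) (t : Fin (κ j - 1)),
      X * (X ^ (κ j - 1 - ((t : ℕ) + 1)) * u j) = X ^ (κ j - 1 - (t : ℕ)) * u j := by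
    intro u j t
    rw [← mul_assoc, ← pow_succ']
    congr 2
    omega
  -- central claim
  have hmain : ∀ v : Fin n → Polynomial 𝔽,
      v ∈ Submodule.span (Polynomial 𝔽) (Set.range Aᵀ) ↔
      ∃ x : ι → Polynomial 𝔽,
        (Polynomial.X : Polynomial 𝔽) • Kp.mulVec x + Lp.mulVec x + Mp.mulVec v = 0 := by
    intro v
    constructor
    · intro hv
      replace hv := (Submodule.mem_span_range_iff_exists_fun (Polynomial 𝔽)).mp hv
      obtain ⟨u, hu⟩ := hv
      refine ⟨fun s : ι => X ^ (κ s.1 - 1 - (s.2 : ℕ)) * u s.1, ?_⟩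
      funext r
      simp only [Pi.add_apply, Pi.smul_apply, smul_eq_mul, Pi.zero_apply]
      rcases r with ⟨j, t⟩ | r2
      · rw [hProw1, hProwL1, hProwM1]
        simp only [Fin.val_mk]
        rw [hxpow u j t]
        ring
      · rw [hinr_key u r2, hProwM2]
        have hva : ∀ a, v a = ∑ j, u j * A a j := by
          intro a
          rw [← hu]
          rw [Finset.sum_apply]
          exact Finset.sum_congr rfl fun j _ => by
            simp [Matrix.transpose_apply, mul_comm]
        have : (∑ a, Polynomial.C (P r2 a) * v a)
            = ∑ j : Fin k, ∑ a, Polynomial.C (P r2 a) * (u j * A a j) := by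
          rw [Finset.sum_comm]
          refine Finset.sum_congr rfl fun a _ => ?_
          rw [hva a, Finset.mul_sum]
        rw [this]
        ring
    · rintro ⟨x, hx⟩
      have hx' : ∀ r, ((Polynomial.X : Polynomial 𝔽) • Kp.mulVec x + Lp.mulVec x
          + Mp.mulVec v) r = 0 := fun r => congrFun hx r
      set u : Fin k → Polynomial 𝔽 :=
        fun j => if h : 0 < κ j then x ⟨j, ⟨κ j - 1, by omega⟩⟩ else 0 with hudef
      have hstep : ∀ (j : Fin k) (t : Fin (κ j - 1)),
          x ⟨j, ⟨(t : ℕ), by omega⟩⟩ = X * x ⟨j, ⟨(t : ℕ) + 1, by omega⟩⟩ := by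
        intro j t
        have h0 := hx' (Sum.inl ⟨j, t⟩)
        simp only [Pi.add_apply, Pi.smul_apply, smul_eq_mul, Pi.zero_apply] at h0
        rw [hProw1, hProwL1, hProwM1] at h0
        linear_combination -h0
      have hform : ∀ (m : ℕ) (j : Fin k) (i : Fin (κ j)), (i : ℕ) + m + 1 = κ j →
          x ⟨j, i⟩ = X ^ m * u j := by
        intro m
        induction m with
        | zero =>
          intro j i hi
          have hpos : 0 < κ j := by omega
          rw [hudef]
          simp only [dif_pos hpos]
          rw [pow_zero, one_mul]
          exact congrArg x (sigma_eq_of _ j _ rfl (by show (i : ℕ) = κ j - 1; omega))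
        | succ m ih =>
          intro j i hi
          have hlt : (i : ℕ) < κ j - 1 := by omega
          have hs := hstep j ⟨(i : ℕ), hlt⟩
          have e0 : (⟨j, i⟩ : ι) = ⟨j, ⟨(i : ℕ), by omega⟩⟩ := sigma_eq_of _ j _ rfl rfl
          rw [e0, hs]
          have e1 := ih j ⟨(i : ℕ) + 1, by omega⟩ (by simp only [Fin.val_mk]; omega)
          rw [e1, ← mul_assoc, ← pow_succ']
      have hxeq : x = fun s : ι => X ^ (κ s.1 - 1 - (s.2 : ℕ)) * u s.1 := by
        funext s
        obtain ⟨j, i⟩ := s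
        exact hform (κ j - 1 - (i : ℕ)) j i (by omega)
      have hw : ∀ r2, ∑ a, Polynomial.C (P r2 a) * (v a - ∑ j, u j * A a j) = 0 := by
        intro r2
        have h0 := hx' (Sum.inr r2)
        simp only [Pi.add_apply, Pi.smul_apply, smul_eq_mul, Pi.zero_apply] at h0
        rw [hxeq, hinr_key u r2, hProwM2] at h0
        simp_rw [mul_sub]
        rw [Finset.sum_sub_distrib]
        simp_rw [Finset.mul_sum]
        rw [Finset.sum_comm]
        linear_combination h0
      set w : Fin n → Polynomial 𝔽 := fun a => v a - ∑ j, u j * A a j with hwdef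
      have hcv : ∀ d : ℕ, (fun a => (w a).coeff d) ∈ Submodule.span 𝔽 (Set.range bT) := by
        intro d
        rw [← hWdef, ← hPker]
        funext r2
        have h0 := hw r2
        have h1 := congrArg (fun p : Polynomial 𝔽 => p.coeff d) h0
        simp only [Polynomial.finset_sum_coeff, Polynomial.coeff_C_mul,
          Polynomial.coeff_zero] at h1
        exact h1
      obtain ⟨p, hp⟩ := poly_comb_of_coeff_mem bT hbTli w hcv
      have hAt : ∀ (t : {j : Fin k // κ j = 0}) (a : Fin n),
          Polynomial.C (bT t a) = A a t.1 := by
        intro t a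
        have h0 : (A a t.1).natDegree ≤ 0 := by
          have h1 := hAdeg a t.1
          have h2 := t.2
          omega
        have h1 := Polynomial.eq_C_of_natDegree_le_zero h0
        rw [h1]
        congr 1
        show (A a t.1).coeff (κ t.1) = (A a t.1).coeff 0
        rw [t.2]
      have hveq : v = (∑ j, u j • Aᵀ j) + ∑ t : {j : Fin k // κ j = 0}, p t • Aᵀ t.1 := by
        funext a
        have h2 := hp a
        have h3 : w a = v a - ∑ j, u j * A a j := rfl
        rw [h3] at h2
        simp only [Pi.add_apply, Finset.sum_apply, Pi.smul_apply, smul_eq_mul,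
          Matrix.transpose_apply]
        have h4 : v a = (∑ j, u j * A a j) + ∑ t : {j : Fin k // κ j = 0},
            p t * Polynomial.C (bT t a) := by
          linear_combination h2
        rw [h4]
        congr 1
        exact Finset.sum_congr rfl fun t _ => by rw [hAt t a]
      rw [hveq]
      refine Submodule.add_mem _ ?_ ?_
      · exact Submodule.sum_mem _ fun j _ =>
          Submodule.smul_mem _ _ (Submodule.subset_span ⟨j, rfl⟩)
      · exact Submodule.sum_mem _ fun t _ =>
          Submodule.smul_mem _ _ (Submodule.subset_span ⟨t.1, rfl⟩)
  -- row evaluations over 𝔽 for K₀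
  have hK₀row1 : ∀ (x : ι → 𝔽) (j : Fin k) (t : Fin (κ j - 1)),
      (K₀ *ᵥ x) (Sum.inl ⟨j, t⟩) = x ⟨j, ⟨(t : ℕ) + 1, by omega⟩⟩ := by
    intro x j t
    show ∑ s : ι, K₀ (Sum.inl ⟨j, t⟩) s * x s = _
    rw [Finset.sum_eq_single (⟨j, ⟨(t : ℕ) + 1, by omega⟩⟩ : ι)]
    · rw [hK₀def]
      simp
    · intro s _ hs
      rw [hK₀def]
      simp only
      rw [if_neg, zero_mul]
      rintro ⟨h1, h2⟩
      exact hs (sigma_eq_of s j _ h1.symm h2)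
    · intro h
      exact absurd (Finset.mem_univ _) h
  have hK₀row2 : ∀ (x : ι → 𝔽) (r2 : Fin (n - Module.finrank 𝔽 W)),
      (K₀ *ᵥ x) (Sum.inr r2)
        = ∑ j : Fin k, -(P.mulVec (c j (κ j)) r2)
            * (if h : 0 < κ j then x ⟨j, ⟨0, h⟩⟩ else 0) := by
    intro x r2
    show ∑ s : ι, K₀ (Sum.inr r2) s * x s = _
    rw [sigma_sum_split (fun s => K₀ (Sum.inr r2) s * x s)]
    refine Finset.sum_congr rfl fun j _ => ?_
    by_cases h : 0 < κ j
    · rw [dif_pos h, Finset.sum_eq_single (⟨0, h⟩ : Fin (κ j))]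
      · rw [hK₀def]
        simp
      · intro i _ hi
        rw [hK₀def]
        simp only
        rw [if_neg, zero_mul]
        intro h0
        exact hi (Fin.ext h0)
      · intro h'
        exact absurd (Finset.mem_univ _) h'
    · rw [dif_neg h, mul_zero]
      have hz : κ j = 0 := by omega
      exact Finset.sum_eq_zero fun i _ => absurd i.isLt (by omega)
  have hKinj : Function.Injective (Matrix.mulVecLin K₀) := by
    rw [injective_iff_map_eq_zero]
    intro x hx
    have hx' : ∀ r, (K₀ *ᵥ x) r = 0 := fun r => congrFun hx r
    -- entries with positive second index vanish
    have h1 : ∀ (j : Fin k) (t : Fin (κ j - 1)), x ⟨j, ⟨(t : ℕ) + 1, by omega⟩⟩ = 0 := by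
      intro j t
      rw [← hK₀row1 x j t]
      exact hx' _
    -- entries with zero second index vanish
    set y : Fin k → 𝔽 := fun j => if h : 0 < κ j then x ⟨j, ⟨0, h⟩⟩ else 0 with hydef
    have h2 : ∀ r2, P.mulVec (fun a => ∑ j, Λ j a * y j) r2 = 0 := by
      intro r2
      have h3 := hx' (Sum.inr r2)
      rw [hK₀row2 x r2] at h3
      have h4 : P.mulVec (fun a => ∑ j, Λ j a * y j) r2
          = ∑ j, (P.mulVec (c j (κ j)) r2) * y j := by
        show ∑ a, P r2 a * ∑ j, Λ j a * y j = _
        simp_rw [Finset.mul_sum]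
        rw [Finset.sum_comm]
        refine Finset.sum_congr rfl fun j _ => ?_
        show ∑ a, P r2 a * (Λ j a * y j) = (∑ a, P r2 a * c j (κ j) a) * y j
        rw [Finset.sum_mul]
        refine Finset.sum_congr rfl fun a _ => by rw [hΛdef]; ring
      rw [h4, ← neg_eq_zero, ← Finset.sum_neg_distrib]
      rw [← h3]
      exact Finset.sum_congr rfl fun j _ => by ring
    have h5 : (fun a => ∑ j, Λ j a * y j) ∈ W := by
      rw [← hPker]
      funext r2
      exact h2 r2
    -- express membership as combination and use independence
    rw [hWdef, Submodule.mem_span_range_iff_exists_fun] at h5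
    obtain ⟨cf, hcf⟩ := h5
    set wc : Fin k → 𝔽 := fun j => if hp : κ j = 0 then cf ⟨j, hp⟩ else 0 with hwcdef
    have h6 : ∑ j, (wc j - y j) • Λ j = 0 := by
      have h7 : ∑ t : {j : Fin k // κ j = 0}, cf t • bT t = ∑ j, wc j • Λ j := by
        have e1 : ∑ j, wc j • Λ j
            = ∑ j ∈ Finset.univ.filter (fun j : Fin k => κ j = 0), wc j • Λ j := by
          symm
          apply Finset.sum_subset (Finset.subset_univ _)
          intro j _ hj
          simp only [Finset.mem_filter, Finset.mem_univ, true_and] at hj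
          simp only [hwcdef, dif_neg hj, zero_smul]
        have e2 : ∑ j ∈ Finset.univ.filter (fun j : Fin k => κ j = 0), wc j • Λ j
            = ∑ t : {j : Fin k // κ j = 0}, wc t.1 • Λ t.1 :=
          Finset.sum_subtype _ (fun j => by simp) _
        rw [e1, e2]
        refine Finset.sum_congr rfl fun t _ => ?_
        simp only [hwcdef, dif_pos t.2]
        rfl
      have h8 : (fun a => ∑ j, Λ j a * y j) = ∑ j, y j • Λ j := by
        funext a
        rw [Finset.sum_apply]
        exact Finset.sum_congr rfl fun j _ => by simp [mul_comm]
      rw [h8] at hcf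
      rw [h7] at hcf
      rw [← sub_eq_zero] at hcf
      rw [← hcf, ← Finset.sum_sub_distrib]
      exact Finset.sum_congr rfl fun j _ => by rw [sub_smul]
    have h9 := (Fintype.linearIndependent_iff.mp hΛli) (fun j => wc j - y j) h6
    have h10 : ∀ j, 0 < κ j → y j = 0 := by
      intro j hj
      have := h9 j
      simp only [hwcdef, dif_neg (by omega : ¬ κ j = 0)] at this
      rwa [zero_sub, neg_eq_zero] at this
    -- conclude
    funext s
    obtain ⟨j, i⟩ := s
    by_cases h : (i : ℕ) = 0
    · have hpos : 0 < κ j := by omega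
      have h11 := h10 j hpos
      rw [hydef] at h11
      simp only [dif_pos hpos] at h11
      rw [show (⟨j, i⟩ : ι) = ⟨j, ⟨0, hpos⟩⟩ from sigma_eq_of _ j _ rfl h]
      exact h11
    · have hlt : (i : ℕ) - 1 < κ j - 1 := by omega
      have h12 := h1 j ⟨(i : ℕ) - 1, hlt⟩
      rw [show (⟨j, i⟩ : ι) = ⟨j, ⟨(i : ℕ) - 1 + 1, by omega⟩⟩ from
        sigma_eq_of _ j _ rfl (by show (i : ℕ) = (i : ℕ) - 1 + 1; omega)]
      exact h12
  have hFCsurj : Function.Surjective (Matrix.mulVecLin (Matrix.fromCols K₀ M₀)) := by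
    intro y
    set x : ι → 𝔽 := fun s =>
      if h : 0 < (s.2 : ℕ) then y (Sum.inl ⟨s.1, ⟨(s.2 : ℕ) - 1, by omega⟩⟩) else 0 with hxdef
    obtain ⟨v, hv⟩ := hPsurj (fun r2 => y (Sum.inr r2) - (K₀ *ᵥ x) (Sum.inr r2))
    refine ⟨Sum.elim x v, ?_⟩
    show Matrix.fromCols K₀ M₀ *ᵥ Sum.elim x v = y
    rw [Matrix.fromCols_mulVec_sumElim]
    funext r
    match r with
    | Sum.inl ⟨j, t⟩ =>
      have hM : (M₀ *ᵥ v) (Sum.inl ⟨j, t⟩) = 0 := by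
        show ∑ a, M₀ (Sum.inl ⟨j, t⟩) a * v a = 0
        exact Finset.sum_eq_zero fun a _ => by rw [hM₀def]; simp
      have hK : (K₀ *ᵥ x) (Sum.inl ⟨j, t⟩) = y (Sum.inl ⟨j, t⟩) := by
        rw [hK₀row1 x j t]
        simp only [hxdef]
        rw [dif_pos (show 0 < ((⟨(t : ℕ) + 1, by omega⟩ : Fin (κ j)) : ℕ) from Nat.succ_pos _)]
        exact congrArg (fun z => y (Sum.inl z)) (sigma_eq_of (⟨j, ⟨(t : ℕ) + 1 - 1, by omega⟩⟩ : (jj : Fin k) × Fin (κ jj - 1)) j t rfl (by show (t : ℕ) + 1 - 1 = (t : ℕ); omega))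
      show (K₀ *ᵥ x) (Sum.inl ⟨j, t⟩) + (M₀ *ᵥ v) (Sum.inl ⟨j, t⟩) = y (Sum.inl ⟨j, t⟩)
      rw [hM, hK, add_zero]
    | Sum.inr r2 =>
      have hM : (M₀ *ᵥ v) (Sum.inr r2) = (P *ᵥ v) r2 := by
        show ∑ a, M₀ (Sum.inr r2) a * v a = ∑ a, P r2 a * v a
        exact Finset.sum_congr rfl fun a _ => by rw [hM₀def]
      show (K₀ *ᵥ x) (Sum.inr r2) + (M₀ *ᵥ v) (Sum.inr r2) = y (Sum.inr r2)
      rw [hM]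
      have := congrFun hv r2
      rw [this]
      ring
  have hBIGsurj : Function.Surjective (Matrix.mulVecLin
      (Matrix.fromCols ((Polynomial.X : Polynomial 𝔽) • Kp + Lp) Mp)) := by
    obtain ⟨Qc, hQc⟩ := leftPrime_of_surjective P hPsurj
    -- vectors supported on the second block of rows are in the range
    have hinr : ∀ z : Rty → Polynomial 𝔽, (∀ r1, z (Sum.inl r1) = 0) →
        z ∈ LinearMap.range (Matrix.mulVecLin
          (Matrix.fromCols ((Polynomial.X : Polynomial 𝔽) • Kp + Lp) Mp)) := by
      intro z hz
      refine ⟨Sum.elim 0 ((Qc.map (fun a => (Polynomial.C a : Polynomial 𝔽))) *ᵥ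
        fun r2 => z (Sum.inr r2)), ?_⟩
      show Matrix.fromCols _ Mp *ᵥ _ = z
      rw [Matrix.fromCols_mulVec_sumElim, Matrix.mulVec_zero, zero_add]
      funext r
      rcases r with r1 | r2
      · rw [hProwM1, (hz r1).symm]
      · rw [hProwM2]
        have e1 : ∀ a : Fin n, ((Qc.map (fun a => (Polynomial.C a : Polynomial 𝔽))) *ᵥ
            fun r2' => z (Sum.inr r2')) a
            = ∑ r2', Polynomial.C (Qc a r2') * z (Sum.inr r2') := by
          intro a
          show (∑ r2', (Qc.map (fun a => (Polynomial.C a : Polynomial 𝔽))) a r2'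
            * z (Sum.inr r2')) = _
          exact Finset.sum_congr rfl fun r2' _ => by rw [Matrix.map_apply]
        calc (∑ a, Polynomial.C (P r2 a) * (((Qc.map (fun a =>
              (Polynomial.C a : Polynomial 𝔽))) *ᵥ fun r2' => z (Sum.inr r2')) a))
            = ∑ a, ∑ r2', Polynomial.C (P r2 a) * (Polynomial.C (Qc a r2')
                * z (Sum.inr r2')) := by
              refine Finset.sum_congr rfl fun a _ => ?_
              rw [e1 a, Finset.mul_sum]
          _ = ∑ r2', ∑ a, Polynomial.C (P r2 a) * (Polynomial.C (Qc a r2')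
                * z (Sum.inr r2')) := Finset.sum_comm
          _ = ∑ r2', Polynomial.C ((P * Qc) r2 r2') * z (Sum.inr r2') := by
              refine Finset.sum_congr rfl fun r2' _ => ?_
              have h1 : (P * Qc) r2 r2' = ∑ a, P r2 a * Qc a r2' := rfl
              rw [h1, map_sum, Finset.sum_mul]
              refine Finset.sum_congr rfl fun a _ => ?_
              rw [Polynomial.C_mul]
              ring
          _ = z (Sum.inr r2) := by
              rw [hQc]
              rw [Finset.sum_eq_single r2]
              · simp [Matrix.one_apply_eq]
              · intro b _ hb
                rw [Matrix.one_apply, if_neg (fun h => hb h.symm)]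
                simp
              · intro h
                exact absurd (Finset.mem_univ _) h
    -- the columns of the first block are in the range
    have hcolv_mem : ∀ s : ι,
        (fun r => ((Polynomial.X : Polynomial 𝔽) • Kp + Lp) r s) ∈
          LinearMap.range (Matrix.mulVecLin
            (Matrix.fromCols ((Polynomial.X : Polynomial 𝔽) • Kp + Lp) Mp)) := by
      intro s
      refine ⟨Sum.elim (Pi.single s 1) 0, ?_⟩
      show Matrix.fromCols _ Mp *ᵥ _ = _
      rw [Matrix.fromCols_mulVec_sumElim, Matrix.mulVec_zero, add_zero,
        Matrix.mulVec_single]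
      funext r
      exact mul_one _
    -- entries of the first block in the shift rows
    have hentry : ∀ (j' : Fin k) (t' : Fin (κ j' - 1)) (j2 : Fin k) (i2 : Fin (κ j2)),
        ((Polynomial.X : Polynomial 𝔽) • Kp + Lp) (Sum.inl ⟨j', t'⟩) ⟨j2, i2⟩
          = (if j' = j2 ∧ (i2 : ℕ) = (t' : ℕ) + 1 then X else 0)
            - (if j' = j2 ∧ (i2 : ℕ) = (t' : ℕ) then 1 else 0) := by
      intro j' t' j2 i2
      simp only [Matrix.add_apply, Matrix.smul_apply, hKpdef, hLpdef, Matrix.map_apply,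
        smul_eq_mul]
      simp only [hK₀def, hL₀def]
      split_ifs <;> simp [sub_eq_add_neg]
    -- value extraction for sigma pairs
    have hsval : ∀ (j' j2 : Fin k) (t' : Fin (κ j' - 1)) (t2 : Fin (κ j2 - 1)),
        (⟨j', t'⟩ : (jj : Fin k) × Fin (κ jj - 1)) = ⟨j2, t2⟩ → (t' : ℕ) = (t2 : ℕ) :=
      fun j' j2 t' t2 h =>
        congrArg (fun z : (jj : Fin k) × Fin (κ jj - 1) => (z.2 : ℕ)) h
    -- singles at shift rows are in the range, by induction on the index
    have hinl : ∀ (m : ℕ) (j : Fin k) (t : Fin (κ j - 1)), (t : ℕ) = m →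
        Pi.single (Sum.inl ⟨j, t⟩) (1 : Polynomial 𝔽) ∈ LinearMap.range
          (Matrix.mulVecLin
            (Matrix.fromCols ((Polynomial.X : Polynomial 𝔽) • Kp + Lp) Mp)) := by
      intro m
      induction m with
      | zero =>
        intro j t ht
        have hsI : (0 : ℕ) < κ j := by omega
        set z' : Rty → Polynomial 𝔽 :=
          (Pi.single (Sum.inl ⟨j, t⟩) (1 : Polynomial 𝔽) : Rty → Polynomial 𝔽)
          + (fun r => ((Polynomial.X : Polynomial 𝔽) • Kp + Lp) r ⟨j, ⟨(t : ℕ), by omega⟩⟩)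
          with hz'def
        have hz'0 : ∀ r1, z' (Sum.inl r1) = 0 := by
          intro r1
          obtain ⟨j', t'⟩ := r1
          rw [hz'def]
          simp only [Pi.add_apply]
          rw [hentry j' t' j ⟨(t : ℕ), by omega⟩]
          simp only [Fin.val_mk]
          rw [Pi.single_apply]
          by_cases hj : j' = j
          · subst hj
            by_cases hT : (t' : ℕ) = (t : ℕ)
            · rw [if_pos (congrArg Sum.inl (sigma_eq_of
                  (⟨j', t'⟩ : (jj : Fin k) × Fin (κ jj - 1)) j' t rfl hT)),
                if_neg (fun hc => (by omega : ¬((t : ℕ) = (t' : ℕ) + 1)) hc.2),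
                if_pos ⟨rfl, hT.symm⟩]
              ring
            · rw [if_neg (fun hEq => hT (hsval _ _ _ _ (Sum.inl.inj hEq))),
                if_neg (fun hc => (by omega : ¬((t : ℕ) = (t' : ℕ) + 1)) hc.2),
                if_neg (fun hc => hT hc.2.symm)]
              ring
          · rw [if_neg (fun hEq => hj (congrArg (fun z : (jj : Fin k) × Fin (κ jj - 1) =>
                z.1) (Sum.inl.inj hEq))),
              if_neg (fun hc => hj hc.1), if_neg (fun hc => hj hc.1)]
            ring
        have hdecomp : (Pi.single (Sum.inl ⟨j, t⟩) (1 : Polynomial 𝔽) : Rty → Polynomial 𝔽)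
            = z' - (fun r => ((Polynomial.X : Polynomial 𝔽) • Kp + Lp) r
                ⟨j, ⟨(t : ℕ), by omega⟩⟩) := by
          rw [hz'def]
          funext r
          simp only [Pi.add_apply, Pi.sub_apply]
          ring
        rw [hdecomp]
        exact Submodule.sub_mem _ (hinr z' hz'0) (hcolv_mem _)
      | succ m ih =>
        intro j t ht
        have htp : m < κ j - 1 := by omega
        set prev : Rty → Polynomial 𝔽 :=
          (Polynomial.X : Polynomial 𝔽) • (Pi.single (Sum.inl ⟨j, ⟨m, htp⟩⟩)
            (1 : Polynomial 𝔽) : Rty → Polynomial 𝔽) with hprevdef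
        set z' : Rty → Polynomial 𝔽 :=
          (Pi.single (Sum.inl ⟨j, t⟩) (1 : Polynomial 𝔽) : Rty → Polynomial 𝔽)
          + (fun r => ((Polynomial.X : Polynomial 𝔽) • Kp + Lp) r ⟨j, ⟨(t : ℕ), by omega⟩⟩)
          - prev with hz'def
        have hz'0 : ∀ r1, z' (Sum.inl r1) = 0 := by
          intro r1
          obtain ⟨j', t'⟩ := r1
          rw [hz'def, hprevdef]
          simp only [Pi.add_apply, Pi.sub_apply, Pi.smul_apply, smul_eq_mul]
          rw [hentry j' t' j ⟨(t : ℕ), by omega⟩]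
          simp only [Fin.val_mk]
          rw [Pi.single_apply, Pi.single_apply]
          by_cases hj : j' = j
          · subst hj
            by_cases hT : (t' : ℕ) = (t : ℕ)
            · rw [if_pos (congrArg Sum.inl (sigma_eq_of
                  (⟨j', t'⟩ : (jj : Fin k) × Fin (κ jj - 1)) j' t rfl hT)),
                if_neg (fun hc => (by omega : ¬((t : ℕ) = (t' : ℕ) + 1)) hc.2),
                if_pos ⟨rfl, hT.symm⟩,
                if_neg (fun hEq => by
                  have h9 := hsval _ _ _ _ (Sum.inl.inj hEq)
                  simp only [Fin.val_mk] at h9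
                  omega)]
              ring
            · by_cases hM : (t' : ℕ) = m
              · rw [if_neg (fun hEq => hT (hsval _ _ _ _ (Sum.inl.inj hEq))),
                  if_pos ⟨rfl, by omega⟩,
                  if_neg (fun hc => hT hc.2.symm),
                  if_pos (congrArg Sum.inl (sigma_eq_of
                    (⟨j', t'⟩ : (jj : Fin k) × Fin (κ jj - 1)) j' ⟨m, htp⟩ rfl
                    (by simp only [Fin.val_mk]; omega)))]
                ring
              · rw [if_neg (fun hEq => hT (hsval _ _ _ _ (Sum.inl.inj hEq))),
                  if_neg (fun hc => (by omega : ¬((t : ℕ) = (t' : ℕ) + 1)) hc.2),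
                  if_neg (fun hc => hT hc.2.symm),
                  if_neg (fun hEq => by
                    have h9 := hsval _ _ _ _ (Sum.inl.inj hEq)
                    simp only [Fin.val_mk] at h9
                    omega)]
                ring
          · rw [if_neg (fun hEq => hj (congrArg (fun z : (jj : Fin k) × Fin (κ jj - 1) =>
                z.1) (Sum.inl.inj hEq))),
              if_neg (fun hc => hj hc.1), if_neg (fun hc => hj hc.1),
              if_neg (fun hEq => hj (congrArg (fun z : (jj : Fin k) × Fin (κ jj - 1) =>
                z.1) (Sum.inl.inj hEq)))]
            ring
        have hdecomp : (Pi.single (Sum.inl ⟨j, t⟩) (1 : Polynomial 𝔽) : Rty → Polynomial 𝔽)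
            = prev + z' - (fun r => ((Polynomial.X : Polynomial 𝔽) • Kp + Lp) r
                ⟨j, ⟨(t : ℕ), by omega⟩⟩) := by
          rw [hz'def]
          funext r
          simp only [Pi.add_apply, Pi.sub_apply]
          ring
        rw [hdecomp]
        refine Submodule.sub_mem _ (Submodule.add_mem _ ?_ (hinr z' hz'0)) (hcolv_mem _)
        rw [hprevdef]
        exact Submodule.smul_mem _ _ (ih j ⟨m, htp⟩ rfl)
    -- conclude surjectivity
    intro y
    have hy : y ∈ LinearMap.range (Matrix.mulVecLin
        (Matrix.fromCols ((Polynomial.X : Polynomial 𝔽) • Kp + Lp) Mp)) := by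
      have hyeq : y = ∑ r : Rty, y r • (Pi.single r (1 : Polynomial 𝔽) : Rty → Polynomial 𝔽) := by
        funext r'
        rw [Finset.sum_apply]
        rw [Finset.sum_eq_single r']
        · simp
        · intro b _ hb
          simp only [Pi.smul_apply, Pi.single_apply]
          rw [if_neg (fun h => hb h.symm)]
          simp
        · intro h
          exact absurd (Finset.mem_univ _) h
      rw [hyeq]
      refine Submodule.sum_mem _ fun r _ => Submodule.smul_mem _ _ ?_
      rcases r with ⟨j, t⟩ | r2
      · exact hinl (t : ℕ) j t rfl
      · exact hinr _ (fun r1' => Pi.single_eq_of_ne (by simp) 1)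
    exact hy
  -- assemble
  refine ⟨K₀.submatrix eR.symm eι.symm, L₀.submatrix eR.symm eι.symm,
    M₀.submatrix eR.symm (Equiv.refl _), ?_, ?_, ?_, ?_⟩
  · -- set equality
    have hKsub : (K₀.submatrix eR.symm eι.symm).map (fun a => (Polynomial.C a : Polynomial 𝔽))
        = Kp.submatrix eR.symm eι.symm := by rfl
    have hLsub : (L₀.submatrix eR.symm eι.symm).map (fun a => (Polynomial.C a : Polynomial 𝔽))
        = Lp.submatrix eR.symm eι.symm := by rfl
    have hMsub : (M₀.submatrix eR.symm (Equiv.refl _)).map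
          (fun a => (Polynomial.C a : Polynomial 𝔽))
        = Mp.submatrix eR.symm (Equiv.refl _) := by rfl
    ext v
    simp only [SetLike.mem_coe, Set.mem_setOf_eq, hKsub, hLsub, hMsub]
    rw [hspan, hmain v]
    constructor
    · rintro ⟨x, hx⟩
      refine ⟨x ∘ ⇑eι.symm, ?_⟩
      rw [Matrix.submatrix_mulVec_equiv, Matrix.submatrix_mulVec_equiv,
        Matrix.submatrix_mulVec_equiv]
      have hxx : (x ∘ ⇑eι.symm) ∘ ⇑(eι.symm).symm = x := by funext s; simp
      rw [hxx]
      funext r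
      have h1 := congrFun hx (eR.symm r)
      simpa using h1
    · rintro ⟨x, hx⟩
      refine ⟨x ∘ ⇑eι, ?_⟩
      rw [Matrix.submatrix_mulVec_equiv, Matrix.submatrix_mulVec_equiv,
        Matrix.submatrix_mulVec_equiv] at hx
      have hxx : (x ∘ ⇑(eι.symm).symm) = x ∘ ⇑eι := by rfl
      rw [hxx] at hx
      funext r
      have h1 := congrFun hx (eR r)
      simpa using h1
  · -- K rank
    rw [rank_submatrix_equiv K₀ eR.symm eι.symm, rank_eq_card_of_injective K₀ hKinj, hcardι]
  · -- [K M] rank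
    have hFC : Matrix.fromCols (K₀.submatrix eR.symm eι.symm)
          (M₀.submatrix eR.symm (Equiv.refl _))
        = (Matrix.fromCols K₀ M₀).submatrix eR.symm
            (Equiv.sumCongr eι.symm (Equiv.refl (Fin n))) := by
      ext r s
      cases s <;> simp [Matrix.fromCols]
    rw [hFC, rank_submatrix_equiv _ eR.symm _, rank_eq_card_of_surjective _ hFCsurj, hcardR]
  · -- left primeness
    have hfinal : Matrix.fromCols
          ((Polynomial.X : Polynomial 𝔽) •
              (K₀.submatrix eR.symm eι.symm).map (fun a => (Polynomial.C a : Polynomial 𝔽)) +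
            (L₀.submatrix eR.symm eι.symm).map (fun a => (Polynomial.C a : Polynomial 𝔽)))
          ((M₀.submatrix eR.symm (Equiv.refl _)).map (fun a => (Polynomial.C a : Polynomial 𝔽)))
        = (Matrix.fromCols ((Polynomial.X : Polynomial 𝔽) • Kp + Lp) Mp).submatrix eR.symm
            (Equiv.sumCongr eι.symm (Equiv.refl (Fin n))) := by
      ext r s
      cases s <;> simp [Matrix.fromCols, hKpdef, hLpdef, hMpdef]
    rw [hfinal]
    obtain ⟨Q, hQ⟩ := leftPrime_of_surjective _ hBIGsurj
    refine ⟨Q.submatrix (Equiv.sumCongr eι.symm (Equiv.refl (Fin n))) eR.symm, ?_⟩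
    rw [show ((Equiv.sumCongr eι.symm (Equiv.refl (Fin n))) : _ → _) =
      ⇑(Equiv.sumCongr eι.symm (Equiv.refl (Fin n))) from rfl]
    rw [Matrix.submatrix_mul_equiv _ _ _ (Equiv.sumCongr eι.symm (Equiv.refl (Fin n))) _, hQ]
    exact Matrix.submatrix_one_equiv eR.symm
end

section
/- Let C ⊆ 𝔽^n[z] be the 𝔽[z]-span of the columns of an n×k polynomial matrix of rank k, with degree δ. Suppose (K, L, M) and (K̃, L̃, M̃) are two triples of constant matrices, with K, L, K̃, L̃ of size (δ+n−k)×δ and M, M̃ of size (δ+n−k)×n, such that each triple represents C via C = { v(z) ∈ 𝔽^n[z] : there exists x(z) ∈ 𝔽^δ[z] with zKx(z) + Lx(z) + Mv(z) = 0 } and each triple satisfies the minimality conditions: (i) K has full column rank; (ii) [K M] has full row rank; (iii) [zK+L | M] is left prime over 𝔽[z]. Then there exist unique invertible matrices T ∈ GL_{δ+n−k}(𝔽) and S ∈ GL_δ(𝔽) such that (K̃, L̃, M̃) = (TKS^{-1}, TLS^{-1}, TM). -/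
open Matrix

section ConvolutionalDefs

variable {𝔽 : Type} [Field 𝔽]

/-- A subset of a module is `𝔽`-linear. -/
def IsLinearSubset (𝔽 : Type) [Field 𝔽] {M : Type} [AddCommGroup M] [Module 𝔽 M]
    (C : Set M) : Prop :=
  (0 : M) ∈ C ∧ (∀ x ∈ C, ∀ y ∈ C, x + y ∈ C) ∧ ∀ (c : 𝔽), ∀ x ∈ C, c • x ∈ C

end ConvolutionalDefs

/-- The first-order representation predicate: `(K, L, M)` represents the code `C` via
`C = { v ∈ 𝔽^n[z] : ∃ x ∈ 𝔽^δ[z], zKx + Lx + Mv = 0 }`. -/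
def RepresentsCode {𝔽 : Type} [Field 𝔽] {n δ m : ℕ}
    (K L : Matrix (Fin m) (Fin δ) 𝔽) (M : Matrix (Fin m) (Fin n) 𝔽)
    (C : Submodule (Polynomial 𝔽) (Fin n → Polynomial 𝔽)) : Prop :=
  (C : Set (Fin n → Polynomial 𝔽)) =
    { v : Fin n → Polynomial 𝔽 | ∃ x : Fin δ → Polynomial 𝔽,
      (Polynomial.X : Polynomial 𝔽) •
          (K.map (fun a => (Polynomial.C a : Polynomial 𝔽))).mulVec x +
        (L.map (fun a => (Polynomial.C a : Polynomial 𝔽))).mulVec x +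
        (M.map (fun a => (Polynomial.C a : Polynomial 𝔽))).mulVec v = 0 }

/-- The minimality conditions for a first-order representation `(K, L, M)`:
`K` has full column rank, `[K M]` has full row rank, `[zK+L | M]` is left prime. -/
def MinimalTriple {𝔽 : Type} [Field 𝔽] {n δ m : ℕ}
    (K L : Matrix (Fin m) (Fin δ) 𝔽) (M : Matrix (Fin m) (Fin n) 𝔽) : Prop :=
  K.rank = δ ∧
  (Matrix.fromCols K M).rank = m ∧
  LeftPrime (Matrix.fromCols
    ((Polynomial.X : Polynomial 𝔽) • K.map (fun a => (Polynomial.C a : Polynomial 𝔽)) +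
      L.map (fun a => (Polynomial.C a : Polynomial 𝔽)))
    (M.map (fun a => (Polynomial.C a : Polynomial 𝔽))))

section FirstOrderAuxSec
open Matrix Polynomial

namespace FirstOrderAux

variable {𝔽 : Type} [Field 𝔽]

noncomputable def φ {α β : Type} (A : Matrix α β 𝔽) : Matrix α β (Polynomial 𝔽) :=
  A.map (fun a => (Polynomial.C a : Polynomial 𝔽))

def cv {α : Type} (x : α → Polynomial 𝔽) (i : ℕ) : α → 𝔽 := fun a => (x a).coeff i

lemma cv_add {α : Type} (x y : α → Polynomial 𝔽) (i : ℕ) :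
    cv (x + y) i = cv x i + cv y i := by funext a; simp [cv]

lemma cv_zero {α : Type} (i : ℕ) : cv (0 : α → Polynomial 𝔽) i = 0 := by funext a; simp [cv]

lemma cv_smulX {α : Type} (x : α → Polynomial 𝔽) (i : ℕ) :
    cv ((X : Polynomial 𝔽) • x) (i + 1) = cv x i := by
  funext a; simp [cv, Polynomial.coeff_X_mul]

lemma cv_smulX_zero {α : Type} (x : α → Polynomial 𝔽) :
    cv ((X : Polynomial 𝔽) • x) 0 = 0 := by
  funext a; simp [cv, Polynomial.coeff_X_mul_zero]

lemma cv_mulVec {α β : Type} [Fintype β] (A : Matrix α β 𝔽) (x : β → Polynomial 𝔽) (i : ℕ) :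
    cv ((φ A).mulVec x) i = A.mulVec (cv x i) := by
  funext a
  simp only [cv, φ, Matrix.mulVec, dotProduct, Matrix.map_apply]
  rw [Polynomial.finset_sum_coeff]
  simp [Polynomial.coeff_C_mul]

lemma cv_vecMul {α β : Type} [Fintype α] (A : Matrix α β 𝔽) (θ : α → Polynomial 𝔽) (i : ℕ) :
    cv (Matrix.vecMul θ (φ A)) i = Matrix.vecMul (cv θ i) A := by
  funext b
  simp only [cv, φ, Matrix.vecMul, dotProduct, Matrix.map_apply]
  rw [Polynomial.finset_sum_coeff]
  simp [Polynomial.coeff_mul_C]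

lemma descend {f g : ℕ → Prop} {d : ℕ}
    (h0 : ∀ e, d ≤ e → f e)
    (gmono : ∀ e, g e → g (e + 1))
    (step : ∀ e, g e → f (e + 1) → f e) :
    ∀ e, g e → f e := by
  have key : ∀ j e, d ≤ e + j → g e → f e := by
    intro j
    induction j with
    | zero => intro e hd _; exact h0 e (by omega)
    | succ j ih =>
      intro e hd hg
      by_cases h : d ≤ e
      · exact h0 e h
      · exact step e hg (ih (e + 1) (by omega) (gmono e hg))
  intro e hg
  exact key d e (by omega) hg

lemma mulVec_injective_of_rank {α β : Type} [Fintype α] [Fintype β]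
    (A : Matrix α β 𝔽) (h : A.rank = Fintype.card β) :
    Function.Injective A.mulVec := by
  have hker : LinearMap.ker A.mulVecLin = ⊥ := by
    have h1 := LinearMap.finrank_range_add_finrank_ker A.mulVecLin
    rw [← Submodule.finrank_eq_zero (S := LinearMap.ker A.mulVecLin)]
    have : Module.finrank 𝔽 (β → 𝔽) = Fintype.card β := Module.finrank_pi 𝔽
    unfold Matrix.rank at h
    omega
  have := LinearMap.ker_eq_bot.mp hker
  intro x y hxy
  exact this (by simpa [Matrix.mulVecLin_apply] using hxy)

lemma vecMul_injective_of_rank {α β : Type} [Fintype α] [Fintype β]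
    (A : Matrix α β 𝔽) (h : A.rank = Fintype.card α) :
    Function.Injective (fun c => Matrix.vecMul c A) := by
  have := mulVec_injective_of_rank Aᵀ (by rwa [Matrix.rank_transpose])
  intro x y hxy
  exact this (by simpa [Matrix.mulVec_transpose] using hxy)

lemma annrow {α β : Type} [Fintype α] [Fintype β] [DecidableEq α] [DecidableEq β]
    (P : Matrix α β (Polynomial 𝔽)) (Q : Matrix β α (Polynomial 𝔽)) (hPQ : P * Q = 1)
    (y : β → Polynomial 𝔽) (hy : ∀ u, P.mulVec u = 0 → dotProduct y u = 0) :
    Matrix.vecMul (Matrix.vecMul y Q) P = y := by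
  funext q
  set s : β → Polynomial 𝔽 := Pi.single q 1 with hs
  have hPu : P.mulVec (s - Q.mulVec (P.mulVec s)) = 0 := by
    rw [Matrix.mulVec_sub, Matrix.mulVec_mulVec, hPQ, Matrix.one_mulVec, sub_self]
  have h := hy _ hPu
  rw [dotProduct_sub, sub_eq_zero] at h
  have h1 : dotProduct y s = y q := by
    rw [hs, dotProduct_single, mul_one]
  have h2 : dotProduct y (Q.mulVec (P.mulVec s)) =
      Matrix.vecMul (Matrix.vecMul y Q) P q := by
    rw [Matrix.dotProduct_mulVec, Matrix.dotProduct_mulVec, hs, dotProduct_single, mul_one]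
  rw [h1, h2] at h
  exact h.symm

section Pencil

variable {n δ m : ℕ}

/-- `(x, v)` solves the first-order system given by `(K, L, M)`. -/
def PencilSol (K L : Matrix (Fin m) (Fin δ) 𝔽) (M : Matrix (Fin m) (Fin n) 𝔽)
    (x : Fin δ → Polynomial 𝔽) (v : Fin n → Polynomial 𝔽) : Prop :=
  (Polynomial.X : Polynomial 𝔽) • (φ K).mulVec x + (φ L).mulVec x + (φ M).mulVec v = 0

variable {K L : Matrix (Fin m) (Fin δ) 𝔽} {M : Matrix (Fin m) (Fin n) 𝔽}

lemma sol_coeff_succ {x v} (h : PencilSol K L M x v) (s : ℕ) :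
    K.mulVec (cv x s) + L.mulVec (cv x (s + 1)) + M.mulVec (cv v (s + 1)) = 0 := by
  have := congrArg (fun w => cv w (s + 1)) h
  simpa [cv_add, cv_zero, cv_smulX, cv_mulVec] using this

lemma sol_coeff_zero {x v} (h : PencilSol K L M x v) :
    L.mulVec (cv x 0) + M.mulVec (cv v 0) = 0 := by
  have := congrArg (fun w => cv w 0) h
  simpa [cv_add, cv_zero, cv_smulX_zero, cv_mulVec] using this

/-- downward vanishing of the state coefficients -/
lemma down (hK : Function.Injective K.mulVec) {x v} (h : PencilSol K L M x v)
    (t₀ : ℕ) (hv : ∀ s, t₀ ≤ s → cv v s = 0) :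
    ∀ s, t₀ ≤ s + 1 → cv x s = 0 := by
  refine descend (f := fun s => cv x s = 0) (g := fun s => t₀ ≤ s + 1)
    (d := (Finset.univ.sup fun r => (x r).natDegree) + 1) ?_ (by omega) ?_
  · intro e he
    funext r
    have hr : (x r).natDegree ≤ Finset.univ.sup fun r => (x r).natDegree :=
      Finset.le_sup (f := fun r => (x r).natDegree) (Finset.mem_univ r)
    exact Polynomial.coeff_eq_zero_of_natDegree_lt (by omega)
  · intro e hg hxe1
    have h1 := sol_coeff_succ h e
    rw [hxe1, hv (e + 1) hg] at h1
    simp only [Matrix.mulVec_zero, add_zero] at h1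
    exact hK (by simpa using h1)

/-- uniqueness of solutions -/
lemma sol_unique (hK : Function.Injective K.mulVec) {x₁ x₂ v}
    (h₁ : PencilSol K L M x₁ v) (h₂ : PencilSol K L M x₂ v) : x₁ = x₂ := by
  have hsol : PencilSol K L M (x₁ - x₂) 0 := by
    unfold PencilSol at *
    rw [Matrix.mulVec_sub, Matrix.mulVec_sub, smul_sub, Matrix.mulVec_zero, add_zero]
    have h3 : ((Polynomial.X : Polynomial 𝔽) • φ K *ᵥ x₁ + φ L *ᵥ x₁ + φ M *ᵥ v)
        - ((Polynomial.X : Polynomial 𝔽) • φ K *ᵥ x₂ + φ L *ᵥ x₂ + φ M *ᵥ v) = 0 := by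
      rw [h₁, h₂, sub_zero]
    rw [← h3]
    abel
  have := down hK hsol 0 (fun s _ => cv_zero s)
  funext r
  apply Polynomial.ext
  intro i
  have := congrFun (this i (by omega)) r
  simpa [cv, sub_eq_zero] using this


lemma vecMul_Xsmul {α β : Type} [Fintype α] (θ : α → Polynomial 𝔽)
    (A : Matrix α β (Polynomial 𝔽)) :
    Matrix.vecMul θ ((Polynomial.X : Polynomial 𝔽) • A)
      = (Polynomial.X : Polynomial 𝔽) • Matrix.vecMul θ A := by
  funext b
  simp only [Matrix.vecMul, dotProduct, Matrix.smul_apply, Pi.smul_apply, smul_eq_mul,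
    Finset.mul_sum]
  apply Finset.sum_congr rfl
  intro i _
  ring

lemma theta (hKM : Function.Injective fun c : Fin m → 𝔽 => Matrix.vecMul c (Matrix.fromCols K M))
    (θ : Fin m → Polynomial 𝔽) (a b : Fin δ → 𝔽) (g : Fin n → 𝔽)
    (hθK : Matrix.vecMul θ ((Polynomial.X : Polynomial 𝔽) • φ K + φ L)
        = fun r => (Polynomial.X : Polynomial 𝔽) * Polynomial.C (a r) + Polynomial.C (b r))
    (hθM : Matrix.vecMul θ (φ M) = fun s => Polynomial.C (g s)) :
    Matrix.vecMul (cv θ 0) K = a ∧ Matrix.vecMul (cv θ 0) L = b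
      ∧ Matrix.vecMul (cv θ 0) M = g ∧ (∀ e, 1 ≤ e → cv θ e = 0) := by
  have hsplit : Matrix.vecMul θ ((Polynomial.X : Polynomial 𝔽) • φ K + φ L)
      = (Polynomial.X : Polynomial 𝔽) • Matrix.vecMul θ (φ K) + Matrix.vecMul θ (φ L) := by
    rw [Matrix.vecMul_add, vecMul_Xsmul]
  have relK : ∀ e : ℕ, Matrix.vecMul (cv θ e) K + Matrix.vecMul (cv θ (e + 1)) L
      = (fun r => (Polynomial.C (a r)).coeff e) := by
    intro e
    have h := congrArg (fun w => cv w (e + 1)) (hsplit.symm.trans hθK)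
    simp only [cv_add, cv_smulX, cv_vecMul] at h
    rw [h]
    funext r
    simp [cv, Polynomial.coeff_X_mul]
  have relM : ∀ e : ℕ, Matrix.vecMul (cv θ e) M = (fun s => (Polynomial.C (g s)).coeff e) := by
    intro e
    have h := congrArg (fun w => cv w e) hθM
    simp only [cv_vecMul] at h
    rw [h]
    rfl
  have hvan : ∀ e, 1 ≤ e → cv θ e = 0 := by
    refine descend (f := fun e => cv θ e = 0) (g := fun e => 1 ≤ e)
      (d := (Finset.univ.sup fun r => (θ r).natDegree) + 1) ?_ (by omega) ?_
    · intro e he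
      funext r
      have hr : (θ r).natDegree ≤ Finset.univ.sup fun r => (θ r).natDegree :=
        Finset.le_sup (f := fun r => (θ r).natDegree) (Finset.mem_univ r)
      exact Polynomial.coeff_eq_zero_of_natDegree_lt (by omega)
    · intro e hg he1
      have hK := relK e
      rw [he1, Matrix.zero_vecMul, add_zero] at hK
      have hK' : Matrix.vecMul (cv θ e) K = 0 := by
        rw [hK]; funext r; simp [Polynomial.coeff_C]
        intro h; omega
      have hM' : Matrix.vecMul (cv θ e) M = 0 := by
        rw [relM e]; funext s; simp [Polynomial.coeff_C]
        intro h; omega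
      apply hKM
      show Matrix.vecMul (cv θ e) (Matrix.fromCols K M) = Matrix.vecMul 0 (Matrix.fromCols K M)
      rw [Matrix.vecMul_fromCols, Matrix.zero_vecMul, hK', hM']
      funext q
      cases q <;> simp
  refine ⟨?_, ?_, ?_, hvan⟩
  · have hK := relK 0
    rw [hvan 1 (by omega), Matrix.zero_vecMul, add_zero] at hK
    rw [hK]; funext r; simp
  · have h := congrArg (fun w => cv w 0) (hsplit.symm.trans hθK)
    simp only [cv_add, cv_smulX_zero, cv_vecMul, zero_add] at h
    rw [h]
    funext r
    simp [cv, Polynomial.mul_coeff_zero]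
  · rw [relM 0]; funext s; simp


lemma phi_mul {α β γ : Type} [Fintype β] (A : Matrix α β 𝔽) (B : Matrix β γ 𝔽) :
    φ (A * B) = φ A * φ B := by
  have : (fun a => (Polynomial.C a : Polynomial 𝔽)) = ⇑(Polynomial.C : 𝔽 →+* Polynomial 𝔽) := rfl
  unfold φ
  rw [this, Matrix.map_mul]

lemma phi_one {α : Type} [Fintype α] [DecidableEq α] :
    φ (1 : Matrix α α 𝔽) = 1 := by
  unfold φ
  exact Matrix.map_one _ (by simp) (by simp)

lemma mulVec_sum_smul {α β γ : Type} [Fintype β] [Fintype γ]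
    (A : Matrix α β (Polynomial 𝔽)) (u : γ → Polynomial 𝔽) (w : γ → β → Polynomial 𝔽) :
    A.mulVec (∑ j : γ, u j • w j) = ∑ j : γ, u j • A.mulVec (w j) := by
  rw [← Matrix.mulVecLin_apply, map_sum]
  simp [Matrix.mulVecLin_apply, Matrix.mulVec_smul]

lemma sol_sum {k : ℕ} {xw : Fin k → Fin δ → Polynomial 𝔽} {gc : Fin k → Fin n → Polynomial 𝔽}
    (hs : ∀ j, PencilSol K L M (xw j) (gc j)) (u : Fin k → Polynomial 𝔽) :
    PencilSol K L M (∑ j, u j • xw j) (∑ j, u j • gc j) := by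
  unfold PencilSol at *
  rw [mulVec_sum_smul, mulVec_sum_smul, mulVec_sum_smul, Finset.smul_sum]
  have hX : ∀ j : Fin k, (Polynomial.X : Polynomial 𝔽) • u j • ((φ K).mulVec (xw j))
      = u j • ((Polynomial.X : Polynomial 𝔽) • (φ K).mulVec (xw j)) := fun j => smul_comm _ _ _
  simp_rw [hX]
  rw [← Finset.sum_add_distrib, ← Finset.sum_add_distrib]
  refine Finset.sum_eq_zero fun j _ => ?_
  rw [← smul_add, ← smul_add, hs j, smul_zero]

lemma dot_row (A B : Matrix (Fin m) (Fin δ) 𝔽) (D : Matrix (Fin m) (Fin n) 𝔽)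
    (x : Fin δ → Polynomial 𝔽) (v : Fin n → Polynomial 𝔽) (a : Fin m) :
    dotProduct
      (Sum.elim (fun r => (Polynomial.X : Polynomial 𝔽) * Polynomial.C (A a r) + Polynomial.C (B a r))
        (fun s => Polynomial.C (D a s))) (Sum.elim x v)
      = ((Polynomial.X : Polynomial 𝔽) • (φ A).mulVec x + (φ B).mulVec x + (φ D).mulVec v) a := by
  rw [sumElim_dotProduct_sumElim]
  simp only [Pi.add_apply, Pi.smul_apply, Matrix.mulVec, dotProduct, φ,
    Matrix.map_apply, smul_eq_mul, Finset.mul_sum]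
  rw [← Finset.sum_add_distrib]
  congr 1
  apply Finset.sum_congr rfl
  intro r _
  ring

/-- The key injectivity: a constant covector orthogonal to all state coefficients is zero. -/
lemma keyinj {k : ℕ} (hKM : Function.Injective fun c : Fin m → 𝔽 => Matrix.vecMul c (Matrix.fromCols K M))
    (Q : Matrix (Fin δ ⊕ Fin n) (Fin m) (Polynomial 𝔽))
    (hPQ : Matrix.fromCols ((Polynomial.X : Polynomial 𝔽) • φ K + φ L) (φ M) * Q = 1)
    (xw : Fin k → Fin δ → Polynomial 𝔽)
    (hdec : ∀ x v, PencilSol K L M x v → ∃ u : Fin k → Polynomial 𝔽, x = ∑ j, u j • xw j)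
    (c : Fin δ → 𝔽) (hcw : ∀ j (i : ℕ), dotProduct c (cv (xw j) i) = 0) :
    c = 0 := by
  set P := Matrix.fromCols ((Polynomial.X : Polynomial 𝔽) • φ K + φ L) (φ M) with hP
  set y : (Fin δ ⊕ Fin n) → Polynomial 𝔽 :=
    Sum.elim (fun r => Polynomial.C (c r)) 0 with hy
  have hann : ∀ u, P.mulVec u = 0 → dotProduct y u = 0 := by
    intro u hu
    have hu' : u = Sum.elim (u ∘ Sum.inl) (u ∘ Sum.inr) := (Sum.elim_comp_inl_inr u).symm
    rw [hu'] at hu ⊢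
    rw [hP, Matrix.fromCols_mulVec_sumElim, Matrix.add_mulVec, Matrix.smul_mulVec] at hu
    have hsol : PencilSol K L M (u ∘ Sum.inl) (u ∘ Sum.inr) := hu
    obtain ⟨uu, hxx⟩ := hdec _ _ hsol
    rw [hy, sumElim_dotProduct_sumElim, zero_dotProduct, add_zero, hxx]
    simp only [dotProduct, Finset.mul_sum, Finset.sum_apply, Pi.smul_apply, smul_eq_mul]
    rw [Finset.sum_comm]
    refine Finset.sum_eq_zero fun j _ => ?_
    have hzero : ∑ r : Fin δ, Polynomial.C (c r) * xw j r = 0 := by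
      apply Polynomial.ext
      intro i
      rw [Polynomial.finset_sum_coeff]
      simpa [Polynomial.coeff_C_mul, dotProduct, cv] using hcw j i
    calc ∑ r : Fin δ, Polynomial.C (c r) * (uu j * xw j r)
        = uu j * ∑ r : Fin δ, Polynomial.C (c r) * xw j r := by
          rw [Finset.mul_sum]; apply Finset.sum_congr rfl; intro r _; ring
      _ = 0 := by rw [hzero, mul_zero]
  have hrow := annrow P Q hPQ y hann
  rw [hP, Matrix.vecMul_fromCols] at hrow
  have hθK : ∀ r, (Matrix.vecMul (Matrix.vecMul y Q) ((Polynomial.X : Polynomial 𝔽) • φ K + φ L)) r = y (Sum.inl r) := fun r => congrFun hrow (Sum.inl r)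
  have hθM : ∀ s, (Matrix.vecMul (Matrix.vecMul y Q) (φ M)) s = y (Sum.inr s) := fun s => congrFun hrow (Sum.inr s)
  have hθK' : Matrix.vecMul (Matrix.vecMul y Q) ((Polynomial.X : Polynomial 𝔽) • φ K + φ L)
      = fun r => (Polynomial.X : Polynomial 𝔽) * Polynomial.C ((0 : Fin δ → 𝔽) r) + Polynomial.C (c r) := by
    funext r
    have := hθK r
    simpa [hy] using this
  have hθM' : Matrix.vecMul (Matrix.vecMul y Q) (φ M) = fun s => Polynomial.C ((0 : Fin n → 𝔽) s) := by
    funext s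
    have := hθM s
    simpa [hy] using this
  obtain ⟨hA, hB, hG, _⟩ := theta hKM (Matrix.vecMul y Q) _ _ _ hθK' hθM'
  have hzero : cv (Matrix.vecMul y Q) 0 = 0 := by
    apply hKM
    show Matrix.vecMul _ (Matrix.fromCols K M) = Matrix.vecMul 0 (Matrix.fromCols K M)
    rw [Matrix.vecMul_fromCols, Matrix.zero_vecMul, hA, hG]
    funext q
    cases q <;> simp
  rw [← hB, hzero, Matrix.zero_vecMul]

lemma row_mul {α β γ : Type} {S : Type} [Semiring S] [Fintype β] (A : Matrix α β S)
    (B : Matrix β γ S) (a : α) : (A * B) a = Matrix.vecMul (A a) B := by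
  funext r
  rw [Matrix.mul_apply]
  rfl

lemma cancel {A B : Matrix (Fin m) (Fin m) 𝔽}
    (hKM : Function.Injective fun c : Fin m → 𝔽 => Matrix.vecMul c (Matrix.fromCols K M))
    (h1 : A * K = B * K) (h2 : A * M = B * M) : A = B := by
  funext a
  apply hKM
  show Matrix.vecMul (A a) (Matrix.fromCols K M) = Matrix.vecMul (B a) (Matrix.fromCols K M)
  rw [Matrix.vecMul_fromCols, Matrix.vecMul_fromCols, ← row_mul, ← row_mul, ← row_mul,
    ← row_mul, h1, h2]

lemma buildT {k : ℕ} {K₂ L₂ : Matrix (Fin m) (Fin δ) 𝔽} {M₂ : Matrix (Fin m) (Fin n) 𝔽}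
    (hKM : Function.Injective fun c : Fin m → 𝔽 => Matrix.vecMul c (Matrix.fromCols K M))
    (Q : Matrix (Fin δ ⊕ Fin n) (Fin m) (Polynomial 𝔽))
    (hPQ : Matrix.fromCols ((Polynomial.X : Polynomial 𝔽) • φ K + φ L) (φ M) * Q = 1)
    {xw xw₂ : Fin k → Fin δ → Polynomial 𝔽} {gc : Fin k → Fin n → Polynomial 𝔽}
    (hdec : ∀ x v, PencilSol K L M x v →
      ∃ u : Fin k → Polynomial 𝔽, x = ∑ j, u j • xw j ∧ v = ∑ j, u j • gc j)
    (hsols₂ : ∀ j, PencilSol K₂ L₂ M₂ (xw₂ j) (gc j))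
    (S₂ : Matrix (Fin δ) (Fin δ) 𝔽) (hS₂ : ∀ j, (φ S₂).mulVec (xw j) = xw₂ j) :
    ∃ T : Matrix (Fin m) (Fin m) 𝔽, T * K = K₂ * S₂ ∧ T * L = L₂ * S₂ ∧ T * M = M₂ := by
  set P := Matrix.fromCols ((Polynomial.X : Polynomial 𝔽) • φ K + φ L) (φ M) with hPdef
  set y : Fin m → (Fin δ ⊕ Fin n) → Polynomial 𝔽 := fun a =>
    Sum.elim (fun r => (Polynomial.X : Polynomial 𝔽) * Polynomial.C ((K₂ * S₂) a r)
      + Polynomial.C ((L₂ * S₂) a r)) (fun s => Polynomial.C (M₂ a s)) with hydef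
  have hann : ∀ a u, P.mulVec u = 0 → dotProduct (y a) u = 0 := by
    intro a u hu
    have hu' : u = Sum.elim (u ∘ Sum.inl) (u ∘ Sum.inr) := (Sum.elim_comp_inl_inr u).symm
    rw [hu'] at hu ⊢
    rw [hPdef, Matrix.fromCols_mulVec_sumElim, Matrix.add_mulVec,
      Matrix.smul_mulVec] at hu
    have hsol : PencilSol K L M (u ∘ Sum.inl) (u ∘ Sum.inr) := hu
    obtain ⟨uu, hxx, hvv⟩ := hdec _ _ hsol
    have hsol₂ : PencilSol K₂ L₂ M₂ ((φ S₂).mulVec (u ∘ Sum.inl)) (u ∘ Sum.inr) := by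
      rw [hxx, hvv, mulVec_sum_smul]
      simp only [hS₂]
      exact sol_sum hsols₂ uu
    have hkey : PencilSol (K₂ * S₂) (L₂ * S₂) M₂ (u ∘ Sum.inl) (u ∘ Sum.inr) := by
      unfold PencilSol at hsol₂ ⊢
      rw [phi_mul, phi_mul, ← Matrix.mulVec_mulVec, ← Matrix.mulVec_mulVec]
      exact hsol₂
    rw [hydef]
    rw [dot_row]
    rw [hkey]
    rfl
  have hrows : ∀ a, Matrix.vecMul (cv (Matrix.vecMul (y a) Q) 0) K = (K₂ * S₂) a
      ∧ Matrix.vecMul (cv (Matrix.vecMul (y a) Q) 0) L = (L₂ * S₂) a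
      ∧ Matrix.vecMul (cv (Matrix.vecMul (y a) Q) 0) M = M₂ a := by
    intro a
    have hsplit := annrow P Q hPQ (y a) (hann a)
    rw [hPdef, Matrix.vecMul_fromCols] at hsplit
    have h1 : Matrix.vecMul (Matrix.vecMul (y a) Q)
        ((Polynomial.X : Polynomial 𝔽) • φ K + φ L)
        = fun r => (Polynomial.X : Polynomial 𝔽) * Polynomial.C ((K₂ * S₂) a r)
          + Polynomial.C ((L₂ * S₂) a r) :=
      funext fun r => congrFun hsplit (Sum.inl r)
    have h2 : Matrix.vecMul (Matrix.vecMul (y a) Q) (φ M) = fun s => Polynomial.C (M₂ a s) :=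
      funext fun s => congrFun hsplit (Sum.inr s)
    obtain ⟨hA, hB, hG, _⟩ := theta hKM _ _ _ _ h1 h2
    exact ⟨hA, hB, hG⟩
  refine ⟨Matrix.of (fun a b => cv (Matrix.vecMul (y a) Q) 0 b), ?_, ?_, ?_⟩
  · funext a r
    have := congrFun (hrows a).1 r
    rw [row_mul, row_mul]
    exact this
  · funext a r
    have := congrFun (hrows a).2.1 r
    rw [row_mul, row_mul]
    exact this
  · funext a s
    have := congrFun (hrows a).2.2 s
    rw [row_mul]
    exact this

end Pencil


end FirstOrderAux

end FirstOrderAuxSec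

/-- Uniqueness of minimal first-order representations: two minimal triples
`(K,L,M)` and `(K̃,L̃,M̃)` representing the same code `C` of degree `δ` are related by unique
invertible constant matrices `T, S` via `(K̃,L̃,M̃) = (TKS⁻¹, TLS⁻¹, TM)`. -/
theorem first_order_representation_unique
    (𝔽 : Type) [Field 𝔽] [Fintype 𝔽] (n k : ℕ)
    (G : Matrix (Fin n) (Fin k) (Polynomial 𝔽))
    (hG : LinearIndependent (Polynomial 𝔽) Gᵀ)
    (C : Submodule (Polynomial 𝔽) (Fin n → Polynomial 𝔽))
    (hC : C = Submodule.span (Polynomial 𝔽) (Set.range Gᵀ))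
    -- the degree `δ` of `C`, computed from any column-reduced encoder
    (U : Matrix (Fin k) (Fin k) (Polynomial 𝔽)) (hU : IsUnit U)
    (hGU : ColumnReduced (G * U))
    (δ : ℕ) (hδ : δ = ∑ j : Fin k, colDeg (G * U) j)
    (K L K' L' : Matrix (Fin (δ + (n - k))) (Fin δ) 𝔽)
    (M M' : Matrix (Fin (δ + (n - k))) (Fin n) 𝔽)
    (hrep : RepresentsCode K L M C) (hmin : MinimalTriple K L M)
    (hrep' : RepresentsCode K' L' M' C) (hmin' : MinimalTriple K' L' M') :
    ∃ (T : Matrix (Fin (δ + (n - k))) (Fin (δ + (n - k))) 𝔽)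
      (S : Matrix (Fin δ) (Fin δ) 𝔽),
      IsUnit T ∧ IsUnit S ∧
      K' = T * K * S⁻¹ ∧ L' = T * L * S⁻¹ ∧ M' = T * M ∧
      ∀ (T₁ : Matrix (Fin (δ + (n - k))) (Fin (δ + (n - k))) 𝔽)
        (S₁ : Matrix (Fin δ) (Fin δ) 𝔽),
        IsUnit T₁ → IsUnit S₁ →
        K' = T₁ * K * S₁⁻¹ → L' = T₁ * L * S₁⁻¹ → M' = T₁ * M →
        T₁ = T ∧ S₁ = S := by
  classical
  obtain ⟨hKrank, hKMrank, hQl⟩ := hmin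
  obtain ⟨hKrank', hKMrank', hQl'⟩ := hmin'
  obtain ⟨Q, hPQ⟩ := hQl
  obtain ⟨Q', hPQ'⟩ := hQl'
  have hKinj : Function.Injective K.mulVec :=
    FirstOrderAux.mulVec_injective_of_rank K (by simpa using hKrank)
  have hKinj' : Function.Injective K'.mulVec :=
    FirstOrderAux.mulVec_injective_of_rank K' (by simpa using hKrank')
  have hKMinj : Function.Injective
      fun c : Fin (δ + (n - k)) → 𝔽 => Matrix.vecMul c (Matrix.fromCols K M) :=
    FirstOrderAux.vecMul_injective_of_rank _ (by simpa using hKMrank)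
  have hKMinj' : Function.Injective
      fun c : Fin (δ + (n - k)) → 𝔽 => Matrix.vecMul c (Matrix.fromCols K' M') :=
    FirstOrderAux.vecMul_injective_of_rank _ (by simpa using hKMrank')
  have hmem : ∀ v, v ∈ C ↔ ∃ x, FirstOrderAux.PencilSol K L M x v := fun v =>
    Set.ext_iff.mp hrep v
  have hmem' : ∀ v, v ∈ C ↔ ∃ x', FirstOrderAux.PencilSol K' L' M' x' v := fun v =>
    Set.ext_iff.mp hrep' v
  -- the span of the columns of G*U is C
  have hGUspan : C = Submodule.span (Polynomial 𝔽) (Set.range (G * U)ᵀ) := by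
    obtain ⟨u, hu⟩ := hU
    have hle : ∀ (A : Matrix (Fin n) (Fin k) (Polynomial 𝔽))
        (W : Matrix (Fin k) (Fin k) (Polynomial 𝔽)),
        Submodule.span (Polynomial 𝔽) (Set.range (A * W)ᵀ)
          ≤ Submodule.span (Polynomial 𝔽) (Set.range Aᵀ) := by
      intro A W
      rw [Submodule.span_le]
      rintro _ ⟨j, rfl⟩
      have hAW : (A * W)ᵀ j = ∑ t, W t j • Aᵀ t := by
        funext i
        simp [Matrix.transpose_apply, Matrix.mul_apply, Finset.sum_apply, mul_comm]
      rw [SetLike.mem_coe, hAW]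
      exact Submodule.sum_mem _ fun t _ =>
        Submodule.smul_mem _ _ (Submodule.subset_span ⟨t, rfl⟩)
    rw [hC]
    apply le_antisymm
    · have hUV : U * (↑u⁻¹ : Matrix (Fin k) (Fin k) (Polynomial 𝔽)) = 1 := by
        rw [← hu]; exact u.mul_inv
      have hG2 : G = (G * U) * (↑u⁻¹ : Matrix (Fin k) (Fin k) (Polynomial 𝔽)) := by
        rw [Matrix.mul_assoc, hUV, Matrix.mul_one]
      calc Submodule.span (Polynomial 𝔽) (Set.range Gᵀ)
          = Submodule.span (Polynomial 𝔽)
              (Set.range ((G * U) * (↑u⁻¹ : Matrix (Fin k) (Fin k) (Polynomial 𝔽)))ᵀ) := by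
            rw [← hG2]
        _ ≤ Submodule.span (Polynomial 𝔽) (Set.range (G * U)ᵀ) := hle _ _
    · exact hle G U
  -- the columns of G*U and their state witnesses
  set gcol : Fin k → (Fin n → Polynomial 𝔽) := fun j => (G * U)ᵀ j with hgcol
  have hgmem : ∀ j, gcol j ∈ C := by
    intro j
    rw [hGUspan]
    exact Submodule.subset_span ⟨j, rfl⟩
  choose xw hxw using fun j => (hmem _).mp (hgmem j)
  choose xw' hxw' using fun j => (hmem' _).mp (hgmem j)
  have hgdeg : ∀ j s, colDeg (G * U) j + 1 ≤ s → FirstOrderAux.cv (gcol j) s = 0 := by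
    intro j s hs
    funext i
    show ((G * U) i j).coeff s = 0
    have hnd : ((G * U) i j).natDegree ≤ colDeg (G * U) j :=
      Finset.le_sup (f := fun i => ((G * U) i j).natDegree) (Finset.mem_univ i)
    exact Polynomial.coeff_eq_zero_of_natDegree_lt (by omega)
  have hxdeg : ∀ j s, colDeg (G * U) j ≤ s → FirstOrderAux.cv (xw j) s = 0 := fun j s hs =>
    FirstOrderAux.down hKinj (hxw j) (colDeg (G * U) j + 1) (hgdeg j) s (by omega)
  have hxdeg' : ∀ j s, colDeg (G * U) j ≤ s → FirstOrderAux.cv (xw' j) s = 0 := fun j s hs =>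
    FirstOrderAux.down hKinj' (hxw' j) (colDeg (G * U) j + 1) (hgdeg j) s (by omega)
  -- decomposition of arbitrary solutions
  have hdec : ∀ x v, FirstOrderAux.PencilSol K L M x v →
      ∃ uu : Fin k → Polynomial 𝔽, x = ∑ j, uu j • xw j ∧ v = ∑ j, uu j • gcol j := by
    intro x v hs
    have hvC : v ∈ C := (hmem v).mpr ⟨x, hs⟩
    rw [hGUspan] at hvC
    obtain ⟨uu, huu⟩ := (Submodule.mem_span_range_iff_exists_fun _).mp hvC
    exact ⟨uu, FirstOrderAux.sol_unique hKinj hs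
      (by rw [← huu] at hs ⊢; exact huu ▸ FirstOrderAux.sol_sum hxw uu), huu.symm⟩
  have hdec' : ∀ x v, FirstOrderAux.PencilSol K' L' M' x v →
      ∃ uu : Fin k → Polynomial 𝔽, x = ∑ j, uu j • xw' j ∧ v = ∑ j, uu j • gcol j := by
    intro x v hs
    have hvC : v ∈ C := (hmem' v).mpr ⟨x, hs⟩
    rw [hGUspan] at hvC
    obtain ⟨uu, huu⟩ := (Submodule.mem_span_range_iff_exists_fun _).mp hvC
    exact ⟨uu, FirstOrderAux.sol_unique hKinj' hs
      (by rw [← huu] at hs ⊢; exact huu ▸ FirstOrderAux.sol_sum hxw' uu), huu.symm⟩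
  -- the coefficient matrices
  have hcard : Fintype.card ((j : Fin k) × Fin (colDeg (G * U) j)) = δ := by
    rw [Fintype.card_sigma]
    simp only [Fintype.card_fin]
    exact hδ.symm
  set e : ((j : Fin k) × Fin (colDeg (G * U) j)) ≃ Fin δ := Fintype.equivFinOfCardEq hcard
    with he
  set V : Matrix (Fin δ) (Fin δ) 𝔽 :=
    Matrix.of (fun r p => FirstOrderAux.cv (xw (e.symm p).1) ((e.symm p).2 : ℕ) r) with hV
  set Wm : Matrix (Fin δ) (Fin δ) 𝔽 :=
    Matrix.of (fun r p => FirstOrderAux.cv (xw' (e.symm p).1) ((e.symm p).2 : ℕ) r) with hW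
  have hVunit : IsUnit V := by
    rw [← Matrix.vecMul_injective_iff_isUnit]
    have hker : ∀ c : Fin δ → 𝔽, Matrix.vecMul c V = 0 → c = 0 := by
      intro c hc
      refine FirstOrderAux.keyinj hKMinj Q hPQ xw
        (fun x v hs => ⟨(hdec x v hs).choose, (hdec x v hs).choose_spec.1⟩) c ?_
      intro j i
      by_cases hi : i < colDeg (G * U) j
      · have h0 := congrFun hc (e ⟨j, ⟨i, hi⟩⟩)
        have hp : e.symm (e ⟨j, ⟨i, hi⟩⟩) = ⟨j, ⟨i, hi⟩⟩ := Equiv.symm_apply_apply _ _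
        have hcol2 : (fun r => V r (e ⟨j, ⟨i, hi⟩⟩)) = FirstOrderAux.cv (xw j) i := by
          funext r
          show FirstOrderAux.cv (xw (e.symm (e ⟨j, ⟨i, hi⟩⟩)).1)
            ((e.symm (e ⟨j, ⟨i, hi⟩⟩)).2 : ℕ) r = _
          rw [hp]
        rw [← hcol2]
        exact h0
      · rw [hxdeg j i (by omega), dotProduct_zero]
    intro c₁ c₂ hcc
    have := hker (c₁ - c₂) (by rw [Matrix.sub_vecMul]; simp only at hcc; rw [hcc, sub_self])
    exact sub_eq_zero.mp this
  have hWunit : IsUnit Wm := by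
    rw [← Matrix.vecMul_injective_iff_isUnit]
    have hker : ∀ c : Fin δ → 𝔽, Matrix.vecMul c Wm = 0 → c = 0 := by
      intro c hc
      refine FirstOrderAux.keyinj hKMinj' Q' hPQ' xw'
        (fun x v hs => ⟨(hdec' x v hs).choose, (hdec' x v hs).choose_spec.1⟩) c ?_
      intro j i
      by_cases hi : i < colDeg (G * U) j
      · have h0 := congrFun hc (e ⟨j, ⟨i, hi⟩⟩)
        have hp : e.symm (e ⟨j, ⟨i, hi⟩⟩) = ⟨j, ⟨i, hi⟩⟩ := Equiv.symm_apply_apply _ _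
        have hcol2 : (fun r => Wm r (e ⟨j, ⟨i, hi⟩⟩)) = FirstOrderAux.cv (xw' j) i := by
          funext r
          show FirstOrderAux.cv (xw' (e.symm (e ⟨j, ⟨i, hi⟩⟩)).1)
            ((e.symm (e ⟨j, ⟨i, hi⟩⟩)).2 : ℕ) r = _
          rw [hp]
        rw [← hcol2]
        exact h0
      · rw [hxdeg' j i (by omega), dotProduct_zero]
    intro c₁ c₂ hcc
    have := hker (c₁ - c₂) (by rw [Matrix.sub_vecMul]; simp only at hcc; rw [hcc, sub_self])
    exact sub_eq_zero.mp this
  have hVdet : IsUnit V.det := (Matrix.isUnit_iff_isUnit_det V).mp hVunit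
  have hWdet : IsUnit Wm.det := (Matrix.isUnit_iff_isUnit_det Wm).mp hWunit
  set S : Matrix (Fin δ) (Fin δ) 𝔽 := Wm * V⁻¹ with hS
  have hSV : S * V = Wm := by
    rw [hS, Matrix.mul_assoc, Matrix.nonsing_inv_mul V hVdet, Matrix.mul_one]
  have hSunit : IsUnit S :=
    hWunit.mul ((Matrix.isUnit_iff_isUnit_det _).mpr (Matrix.isUnit_nonsing_inv_det V hVdet))
  have hSdet : IsUnit S.det := (Matrix.isUnit_iff_isUnit_det S).mp hSunit
  have hVcol : ∀ p, V.mulVec (Pi.single p 1)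
      = FirstOrderAux.cv (xw (e.symm p).1) ((e.symm p).2 : ℕ) := by
    intro p
    rw [Matrix.mulVec_single]
    funext r
    simp [hV]
  have hWcol : ∀ p, Wm.mulVec (Pi.single p 1)
      = FirstOrderAux.cv (xw' (e.symm p).1) ((e.symm p).2 : ℕ) := by
    intro p
    rw [Matrix.mulVec_single]
    funext r
    simp [hW]
  have hSx : ∀ j (i : ℕ), S.mulVec (FirstOrderAux.cv (xw j) i) = FirstOrderAux.cv (xw' j) i := by
    intro j i
    by_cases hi : i < colDeg (G * U) j
    · have h1 : FirstOrderAux.cv (xw j) i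
          = V.mulVec (Pi.single (e ⟨j, ⟨i, hi⟩⟩) 1) := by
        rw [hVcol, Equiv.symm_apply_apply]
      have h2 : FirstOrderAux.cv (xw' j) i
          = Wm.mulVec (Pi.single (e ⟨j, ⟨i, hi⟩⟩) 1) := by
        rw [hWcol, Equiv.symm_apply_apply]
      rw [h1, h2, Matrix.mulVec_mulVec, hSV]
    · rw [hxdeg j i (by omega), hxdeg' j i (by omega), Matrix.mulVec_zero]
  have hφS : ∀ j, ((FirstOrderAux.φ S).mulVec (xw j)) = xw' j := by
    intro j
    funext r
    apply Polynomial.ext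
    intro i
    have h1 := congrFun (FirstOrderAux.cv_mulVec S (xw j) i) r
    have h2 := congrFun (hSx j i) r
    exact h1.trans h2
  obtain ⟨T, hTK, hTL, hTM⟩ :=
    FirstOrderAux.buildT hKMinj Q hPQ hdec hxw' S hφS
  have hφSi : ∀ j, ((FirstOrderAux.φ S⁻¹).mulVec (xw' j)) = xw j := by
    intro j
    rw [← hφS j, Matrix.mulVec_mulVec, ← FirstOrderAux.phi_mul,
      Matrix.nonsing_inv_mul S hSdet, FirstOrderAux.phi_one, Matrix.one_mulVec]
  obtain ⟨T', hTK', hTL', hTM'⟩ :=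
    FirstOrderAux.buildT hKMinj' Q' hPQ' hdec' hxw S⁻¹ hφSi
  have hTT' : T * T' = 1 := by
    apply FirstOrderAux.cancel hKMinj'
    · rw [Matrix.mul_assoc, hTK', ← Matrix.mul_assoc, hTK, Matrix.mul_assoc,
        Matrix.mul_nonsing_inv S hSdet, Matrix.mul_one, Matrix.one_mul]
    · rw [Matrix.mul_assoc, hTM', hTM, Matrix.one_mul]
  have hT'T : T' * T = 1 := by
    apply FirstOrderAux.cancel hKMinj
    · rw [Matrix.mul_assoc, hTK, ← Matrix.mul_assoc, hTK', Matrix.mul_assoc,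
        Matrix.nonsing_inv_mul S hSdet, Matrix.mul_one, Matrix.one_mul]
    · rw [Matrix.mul_assoc, hTM, hTM', Matrix.one_mul]
  have hTunit : IsUnit T := ⟨⟨T, T', hTT', hT'T⟩, rfl⟩
  refine ⟨T, S, hTunit, hSunit, ?_, ?_, hTM.symm, ?_⟩
  · rw [hTK, Matrix.mul_assoc, Matrix.mul_nonsing_inv S hSdet, Matrix.mul_one]
  · rw [hTL, Matrix.mul_assoc, Matrix.mul_nonsing_inv S hSdet, Matrix.mul_one]
  · intro T₁ S₁ hT₁u hS₁u hK₁ hL₁ hM₁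
    have hS₁det : IsUnit S₁.det := (Matrix.isUnit_iff_isUnit_det S₁).mp hS₁u
    have hK₁' : K' * S₁ = T₁ * K := by
      rw [hK₁, Matrix.mul_assoc (T₁ * K) S₁⁻¹ S₁, Matrix.nonsing_inv_mul S₁ hS₁det,
        Matrix.mul_one]
    have hL₁' : L' * S₁ = T₁ * L := by
      rw [hL₁, Matrix.mul_assoc (T₁ * L) S₁⁻¹ S₁, Matrix.nonsing_inv_mul S₁ hS₁det,
        Matrix.mul_one]
    have hsolS₁ : ∀ j, FirstOrderAux.PencilSol K' L' M'
        ((FirstOrderAux.φ S₁).mulVec (xw j)) (gcol j) := by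
      intro j
      unfold FirstOrderAux.PencilSol
      have hrw : (Polynomial.X : Polynomial 𝔽) •
            (FirstOrderAux.φ K').mulVec ((FirstOrderAux.φ S₁).mulVec (xw j))
          + (FirstOrderAux.φ L').mulVec ((FirstOrderAux.φ S₁).mulVec (xw j))
          + (FirstOrderAux.φ M').mulVec (gcol j)
          = (FirstOrderAux.φ T₁).mulVec ((Polynomial.X : Polynomial 𝔽) •
              (FirstOrderAux.φ K).mulVec (xw j)
            + (FirstOrderAux.φ L).mulVec (xw j) + (FirstOrderAux.φ M).mulVec (gcol j)) := by
        rw [Matrix.mulVec_mulVec, Matrix.mulVec_mulVec, ← FirstOrderAux.phi_mul,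
          ← FirstOrderAux.phi_mul, hK₁', hL₁', hM₁, FirstOrderAux.phi_mul,
          FirstOrderAux.phi_mul, FirstOrderAux.phi_mul, ← Matrix.mulVec_mulVec,
          ← Matrix.mulVec_mulVec, ← Matrix.mulVec_mulVec, Matrix.mulVec_add,
          Matrix.mulVec_add, Matrix.mulVec_smul]
      rw [hrw, hxw j, Matrix.mulVec_zero]
    have hxeq : ∀ j, (FirstOrderAux.φ S₁).mulVec (xw j) = xw' j := fun j =>
      FirstOrderAux.sol_unique hKinj' (hsolS₁ j) (hxw' j)
    have hcveq : ∀ j (i : ℕ), S₁.mulVec (FirstOrderAux.cv (xw j) i)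
        = S.mulVec (FirstOrderAux.cv (xw j) i) := by
      intro j i
      rw [hSx j i]
      funext r
      have h1 := congrFun (FirstOrderAux.cv_mulVec S₁ (xw j) i) r
      rw [← h1, hxeq j]
    have hS₁V : S₁ * V = S * V := by
      funext r p
      have := congrFun (hcveq (e.symm p).1 ((e.symm p).2 : ℕ)) r
      simpa [Matrix.mul_apply, Matrix.mulVec, dotProduct, hV] using this
    have hS₁S : S₁ = S := by
      have h := congrArg (fun A => A * V⁻¹) hS₁V
      simpa [Matrix.mul_assoc, Matrix.mul_nonsing_inv V hVdet] using h
    refine ⟨?_, hS₁S⟩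
    apply FirstOrderAux.cancel hKMinj
    · rw [← hK₁', hS₁S, hTK]
    · rw [← hM₁, hTM]
end
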